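/- arXiv:2205.11897 — 11 statements merged into one kernel-verified Lean document; each statement's English description precedes it below -/
import Mathlib

section
/- Let G and H be locally compact, second countable (lcsc) topological groups and let Γ ⊆ G × H be a uniform lattice such that π_H(Γ) is dense in H. Then for every nonempty open subset U ⊆ H there exists a compact set K ⊆ G such that (K × U)·Γ = G × H. -/
open Pointwise

/-- Let `G` and `H` be locally compact, second countable topological groups
and let `Γ ⊆ G × H` be a uniform lattice (a discrete subgroup which is cocompact, i.e. there is a
compact `C` with `C·Γ = G × H`) such that `π_H(Γ)` is dense in `H`. Then for every nonempty open
subset `U ⊆ H` there exists a compact set `K ⊆ G` with `(K × U)·Γ = G × H`. -/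
theorem exists_compact_factor_of_dense_proj
    {G H : Type*}
    [Group G] [TopologicalSpace G] [IsTopologicalGroup G]
    [LocallyCompactSpace G] [SecondCountableTopology G]
    [Group H] [TopologicalSpace H] [IsTopologicalGroup H]
    [LocallyCompactSpace H] [SecondCountableTopology H]
    (Γ : Subgroup (G × H)) [DiscreteTopology Γ]
    (hcocompact : ∃ C : Set (G × H), IsCompact C ∧ C * (Γ : Set (G × H)) = Set.univ)
    (hdense : Dense (Prod.snd '' (Γ : Set (G × H))))
    (U : Set H) (hUopen : IsOpen U) (hUne : U.Nonempty) :
    ∃ K : Set G, IsCompact K ∧ (K ×ˢ U) * (Γ : Set (G × H)) = Set.univ := by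
  obtain ⟨C, hC, hCΓ⟩ := hcocompact
  -- the open cover of C by translates (univ ×ˢ U) * γ, γ ∈ Γ
  set O : Γ → Set (G × H) := fun γ => (Set.univ ×ˢ U) * {(γ : G × H)} with hO
  have hOopen : ∀ γ : Γ, IsOpen (O γ) :=
    fun γ => (isOpen_univ.prod hUopen).mul_right
  have hcover : C ⊆ ⋃ γ : Γ, O γ := by
    rintro ⟨g, h⟩ -
    have hopen : IsOpen (U⁻¹ * {h}) := hUopen.inv.mul_right
    have hne : (U⁻¹ * {h}).Nonempty := by
      obtain ⟨u, hu⟩ := hUne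
      exact ⟨u⁻¹ * h, Set.mul_mem_mul (Set.inv_mem_inv.mpr hu) rfl⟩
    obtain ⟨y, hyΓ, hyU⟩ := hdense.exists_mem_open hopen hne
    obtain ⟨γ, hγΓ, hγy⟩ := hyΓ
    obtain ⟨v, hv, w, hw, hvw⟩ := hyU
    rcases hw with rfl
    -- y = γ.2 = v * h with v ∈ U⁻¹, so h = v⁻¹ * γ.2
    refine Set.mem_iUnion.mpr ⟨⟨γ, hγΓ⟩, ?_⟩
    refine ⟨(g * γ.1⁻¹, v⁻¹), ⟨Set.mem_univ _, Set.mem_inv.mp hv⟩, γ, rfl, ?_⟩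
    have hhw : v⁻¹ * γ.2 = w := by
      rw [← hγy] at hvw
      simp only at hvw
      rw [← hvw]; group
    refine Prod.ext ?_ hhw
    simp [mul_assoc]
  obtain ⟨t, ht⟩ := hC.elim_finite_subcover O hOopen hcover
  -- the compact set K
  refine ⟨(Prod.fst '' C) * ((fun γ : Γ => ((γ : G × H).1)⁻¹) '' (t : Set Γ)),
    (hC.image continuous_fst).mul (((t : Set Γ).toFinite.image _).isCompact), ?_⟩
  apply Set.eq_univ_of_univ_subset
  rw [← hCΓ]
  rintro x ⟨c, hc, γ₀, hγ₀, rfl⟩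
  obtain ⟨γ, hγt, hcγ⟩ := Set.mem_iUnion₂.mp (ht hc)
  obtain ⟨p, ⟨-, hpU⟩, q, hq, hpq⟩ := hcγ
  rcases hq with rfl
  have hp1 : p.1 = c.1 * ((γ : G × H).1)⁻¹ := by
    have : p.1 * (γ : G × H).1 = c.1 := congrArg Prod.fst hpq
    rw [← this]; group
  have hx : c * γ₀ = p * ((γ : G × H) * γ₀) := by
    rw [← hpq]; simp only [mul_assoc]
  show c * γ₀ ∈ _
  rw [hx]
  refine Set.mul_mem_mul ⟨?_, hpU⟩ (mul_mem γ.2 hγ₀)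
  rw [hp1]
  exact Set.mul_mem_mul ⟨c, hc, rfl⟩ ⟨γ, hγt, rfl⟩
end

section
/- Let (G, H, Γ) be a cut-and-project scheme, where G carries a right-invariant, proper metric compatible with its topology, and let W ⊆ H be a subset with nonempty interior. Then the set Λ := π_G((G × W) ∩ Γ) is relatively dense in G: there exists R > 0 such that B_R(x) ∩ Λ ≠ ∅ for every x ∈ G. -/
open Pointwise

/-- Let `(G, H, Γ)` be a cut-and-project scheme (Γ a uniform lattice in `G × H`,
`π_G|_Γ` injective, `π_H(Γ)` dense in `H`), where `G` carries a right-invariant, proper metric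
compatible with its topology, and let `W ⊆ H` have nonempty interior.  Then the cut-and-project
set `Λ := π_G((G × W) ∩ Γ)` is relatively dense in `G`. -/
theorem cut_and_project_relatively_dense
    {G H : Type*}
    [Group G] [MetricSpace G] [IsTopologicalGroup G] [ProperSpace G] [SecondCountableTopology G]
    [Group H] [TopologicalSpace H] [IsTopologicalGroup H]
    [LocallyCompactSpace H] [SecondCountableTopology H]
    (hinvG : ∀ x y g : G, dist (x * g) (y * g) = dist x y)
    (Γ : Subgroup (G × H)) [DiscreteTopology Γ]
    (hcocompact : ∃ C : Set (G × H), IsCompact C ∧ C * (Γ : Set (G × H)) = Set.univ)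
    (hinj : Set.InjOn Prod.fst (Γ : Set (G × H)))
    (hdense : Dense (Prod.snd '' (Γ : Set (G × H))))
    (W : Set H) (hW : (interior W).Nonempty) :
    ∃ R : ℝ, 0 < R ∧ ∀ x : G,
      (Metric.ball x R ∩ (Prod.fst '' ((Set.univ ×ˢ W) ∩ (Γ : Set (G × H))))).Nonempty := by
  obtain ⟨C, hC, hCΓ⟩ := hcocompact
  obtain ⟨w₀, hw₀⟩ := hW
  set V : Set H := interior W with hV
  -- the compact set of possible second coordinates
  set S : Set H := (fun c : G × H => c.2⁻¹ * w₀) '' C with hS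
  have hScomp : IsCompact S := hC.image (by continuity)
  -- open cover of S indexed by Γ
  set U : Γ → Set H := fun δ => (fun h => (δ : G × H).2 * h) ⁻¹' V with hU
  have hUopen : ∀ δ : Γ, IsOpen (U δ) := fun δ =>
    isOpen_interior.preimage (continuous_const.mul continuous_id)
  have hcover : S ⊆ ⋃ δ : Γ, U δ := by
    intro h _
    have hOopen : IsOpen ((fun y => y * h) ⁻¹' V) :=
      isOpen_interior.preimage (continuous_id.mul continuous_const)
    have hOne : ((fun y => y * h) ⁻¹' V).Nonempty := by
      refine ⟨w₀ * h⁻¹, ?_⟩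
      simpa [mul_assoc] using hw₀
    obtain ⟨y, ⟨γ, hγΓ, rfl⟩, hy⟩ := hdense.exists_mem_open hOopen hOne
    exact Set.mem_iUnion.2 ⟨⟨γ, hγΓ⟩, hy⟩
  obtain ⟨t, ht⟩ := hScomp.elim_finite_subcover U hUopen hcover
  -- bound for the finitely many correcting elements
  set B : ℝ := ∑ δ ∈ t, dist (δ : G × H).1 1 with hB
  have hBnn : 0 ≤ B := Finset.sum_nonneg fun _ _ => dist_nonneg
  have hBle : ∀ δ ∈ t, dist (δ : G × H).1 1 ≤ B := fun δ hδ =>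
    Finset.single_le_sum (f := fun δ : Γ => dist ((δ : G × H)).1 1) (fun _ _ => dist_nonneg) hδ
  -- bound over the compact set C
  have hCne : C.Nonempty := by
    have : (1 : G × H) ∈ C * (Γ : Set (G × H)) := by rw [hCΓ]; trivial
    obtain ⟨c, hc, _, _, _⟩ := this
    exact ⟨c, hc⟩
  obtain ⟨c₀, _, hM⟩ := hC.exists_isMaxOn hCne
    ((continuous_fst.inv.dist continuous_const).continuousOn
      (f := fun c : G × H => dist c.1⁻¹ 1))
  set M : ℝ := dist (c₀ : G × H).1⁻¹ 1 with hMdef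
  refine ⟨B + M + 1, by positivity, fun x => ?_⟩
  -- decompose (x, w₀)
  have hmem : ((x, w₀) : G × H) ∈ C * (Γ : Set (G × H)) := by rw [hCΓ]; trivial
  obtain ⟨c, hc, γ, hγΓ, hcγ⟩ := hmem
  have h1 : c.1 * γ.1 = x := congrArg Prod.fst hcγ
  have h2 : c.2 * γ.2 = w₀ := congrArg Prod.snd hcγ
  have hγ1 : γ.1 = c.1⁻¹ * x := by rw [← h1]; group
  have hγ2 : γ.2 = c.2⁻¹ * w₀ := by rw [← h2]; group
  have hγ2S : γ.2 ∈ S := ⟨c, hc, hγ2.symm⟩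
  obtain ⟨δ, hδt, hδ⟩ := Set.mem_iUnion₂.1 (ht hγ2S)
  have hδV : (δ : G × H).2 * γ.2 ∈ V := hδ
  refine ⟨((δ : G × H) * γ).1, ?_, (δ : G × H) * γ, ⟨⟨trivial, interior_subset hδV⟩,
    mul_mem δ.2 hγΓ⟩, rfl⟩
  have key : dist ((δ : G × H).1 * γ.1) x ≤ B + M := by
    calc dist ((δ : G × H).1 * γ.1) x
        ≤ dist ((δ : G × H).1 * γ.1) γ.1 + dist γ.1 x := dist_triangle _ _ _
      _ = dist (δ : G × H).1 1 + dist c.1⁻¹ 1 := by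
          rw [hγ1]
          congr 1
          · calc dist ((δ : G × H).1 * (c.1⁻¹ * x)) (c.1⁻¹ * x)
                = dist ((δ : G × H).1 * (c.1⁻¹ * x)) (1 * (c.1⁻¹ * x)) := by rw [one_mul]
              _ = dist (δ : G × H).1 1 := hinvG _ _ _
          · calc dist (c.1⁻¹ * x) x = dist (c.1⁻¹ * x) (1 * x) := by rw [one_mul]
              _ = dist c.1⁻¹ 1 := hinvG _ _ _
      _ ≤ B + M := add_le_add (hBle δ hδt) (hM hc)
  calc dist ((δ : G × H) * γ).1 x = dist ((δ : G × H).1 * γ.1) x := rfl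
    _ ≤ B + M := key
    _ < B + M + 1 := by linarith
end

section
/- Let (G, H, Γ) be a cut-and-project scheme, where G and H each carry a right-invariant, proper metric compatible with the topology, and let W ⊆ H be relatively compact. Then the set Λ := π_G((G × W) ∩ Γ) is uniformly discrete in G: there exists r > 0 such that d(λ, μ) ≥ r for all distinct λ, μ ∈ Λ. -/
open Pointwise

/-- Let `(G, H, Γ)` be a cut-and-project scheme, where `G` and `H` each carry a
right-invariant, proper metric compatible with the topology (on `G × H` the product metric is the
maximum of the component metrics, as in Mathlib's `Prod` instance), and let `W ⊆ H` be relatively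
compact.  Then `Λ := π_G((G × W) ∩ Γ)` is uniformly discrete in `G`. -/
theorem cut_and_project_uniformly_discrete
    {G H : Type*}
    [Group G] [MetricSpace G] [IsTopologicalGroup G] [ProperSpace G] [SecondCountableTopology G]
    [Group H] [MetricSpace H] [IsTopologicalGroup H] [ProperSpace H] [SecondCountableTopology H]
    (hinvG : ∀ x y g : G, dist (x * g) (y * g) = dist x y)
    (hinvH : ∀ x y g : H, dist (x * g) (y * g) = dist x y)
    (Γ : Subgroup (G × H)) [DiscreteTopology Γ]
    (hcocompact : ∃ C : Set (G × H), IsCompact C ∧ C * (Γ : Set (G × H)) = Set.univ)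
    (hinj : Set.InjOn Prod.fst (Γ : Set (G × H)))
    (hdense : Dense (Prod.snd '' (Γ : Set (G × H))))
    (W : Set H) (hWrc : IsCompact (closure W)) :
    ∃ r : ℝ, 0 < r ∧
      ∀ l ∈ Prod.fst '' ((Set.univ ×ˢ W) ∩ (Γ : Set (G × H))),
      ∀ m ∈ Prod.fst '' ((Set.univ ×ˢ W) ∩ (Γ : Set (G × H))),
        l ≠ m → r ≤ dist l m := by
  classical
  set K : Set H := closure W * (closure W)⁻¹ with hK
  have hKc : IsCompact K := hWrc.mul hWrc.inv
  have hΓclosed : IsClosed (Γ : Set (G × H)) := Subgroup.isClosed_of_discrete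
  set C : Set (G × H) := Metric.closedBall 1 1 ×ˢ K with hC
  have hCc : IsCompact C := (isCompact_closedBall 1 1).prod hKc
  have hfin : ((Γ : Set (G × H)) ∩ C).Finite := by
    have hcmp : IsCompact ((Γ : Set (G × H)) ∩ C) := hCc.inter_left hΓclosed
    haveI : DiscreteTopology ((Γ : Set (G × H)) ∩ C : Set (G × H)) :=
      DiscreteTopology.of_subset inferInstance Set.inter_subset_left
    exact hcmp.finite ⟨‹_›⟩
  set S : Set (G × H) := {x ∈ (Γ : Set (G × H)) ∩ C | x.1 ≠ 1} with hS
  have hSfin : S.Finite := hfin.subset fun x hx => hx.1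
  have hImfin : ((fun x : G × H => dist x.1 1) '' S).Finite := hSfin.image _
  set T : Finset ℝ := insert (1 : ℝ) hImfin.toFinset with hT
  have hTne : T.Nonempty := ⟨1, Finset.mem_insert_self _ _⟩
  set r : ℝ := T.min' hTne with hr
  have hTpos : ∀ y ∈ T, 0 < y := by
    intro y hy
    rcases Finset.mem_insert.1 hy with h | h
    · simp [h]
    · rw [Set.Finite.mem_toFinset] at h
      rcases h with ⟨x, hx, rfl⟩
      exact dist_pos.2 hx.2
  have hrpos : 0 < r := (Finset.lt_min'_iff T hTne).2 hTpos
  have key : ∀ γ ∈ Γ, (γ : G × H).2 ∈ K → (γ : G × H).1 ≠ 1 → r ≤ dist (γ : G × H).1 1 := by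
    intro γ hγ h2 h1
    by_cases hd : dist (γ : G × H).1 1 ≤ 1
    · have hγC : γ ∈ C := ⟨Metric.mem_closedBall.2 hd, h2⟩
      have : dist (γ : G × H).1 1 ∈ T := by
        refine Finset.mem_insert_of_mem ?_
        rw [Set.Finite.mem_toFinset]
        exact ⟨γ, ⟨⟨hγ, hγC⟩, h1⟩, rfl⟩
      exact T.min'_le _ this
    · exact le_trans (T.min'_le 1 (Finset.mem_insert_self _ _)) (le_of_not_ge hd)
  refine ⟨r, hrpos, ?_⟩
  rintro l ⟨⟨a, wa⟩, ⟨⟨-, hwa⟩, haΓ⟩, rfl⟩ m ⟨⟨b, wb⟩, ⟨⟨-, hwb⟩, hbΓ⟩, rfl⟩ hne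
  have hγ : ((a, wa) * (b, wb)⁻¹ : G × H) ∈ Γ := Γ.mul_mem haΓ (Γ.inv_mem hbΓ)
  have h2 : (((a, wa) * (b, wb)⁻¹ : G × H)).2 ∈ K :=
    Set.mul_mem_mul (subset_closure hwa) (Set.inv_mem_inv.2 (subset_closure hwb))
  have h1 : (((a, wa) * (b, wb)⁻¹ : G × H)).1 ≠ 1 := by
    simp only [Prod.fst_mul, Prod.fst_inv]
    intro h
    exact hne (by rwa [mul_inv_eq_one] at h)
  have := key _ hγ h2 h1
  have heq : dist (((a, wa) * (b, wb)⁻¹ : G × H)).1 1 = dist a b := by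
    have := hinvG (a * b⁻¹) 1 b
    simpa [mul_assoc] using this.symm
  linarith [heq ▸ this]
end

section
/- Let (G, H, Γ) be a cut-and-project scheme, where G and H each carry a right-invariant, proper metric compatible with the topology, and let W ⊆ H be relatively compact with nonempty interior. Then the set Λ := π_G((G × W) ∩ Γ) has finite local complexity: ΛΛ⁻¹ is locally finite in G, i.e. every bounded subset of G contains only finitely many points of ΛΛ⁻¹. -/
open Pointwise

/-- Let `(G, H, Γ)` be a cut-and-project scheme, where `G` and `H` each carry a
right-invariant, proper metric compatible with the topology, and let `W ⊆ H` be relatively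
compact with nonempty interior.  Then `Λ := π_G((G × W) ∩ Γ)` has finite local complexity:
`ΛΛ⁻¹` is locally finite in `G` (every bounded set contains finitely many of its points). -/
theorem cut_and_project_flc
    {G H : Type*}
    [Group G] [MetricSpace G] [IsTopologicalGroup G] [ProperSpace G] [SecondCountableTopology G]
    [Group H] [MetricSpace H] [IsTopologicalGroup H] [ProperSpace H] [SecondCountableTopology H]
    (hinvG : ∀ x y g : G, dist (x * g) (y * g) = dist x y)
    (hinvH : ∀ x y g : H, dist (x * g) (y * g) = dist x y)
    (Γ : Subgroup (G × H)) [DiscreteTopology Γ]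
    (hcocompact : ∃ C : Set (G × H), IsCompact C ∧ C * (Γ : Set (G × H)) = Set.univ)
    (hinj : Set.InjOn Prod.fst (Γ : Set (G × H)))
    (hdense : Dense (Prod.snd '' (Γ : Set (G × H))))
    (W : Set H) (hWrc : IsCompact (closure W)) (hWint : (interior W).Nonempty) :
    ∀ B : Set G, Bornology.IsBounded B →
      (B ∩ ((Prod.fst '' ((Set.univ ×ˢ W) ∩ (Γ : Set (G × H)))) *
        (Prod.fst '' ((Set.univ ×ˢ W) ∩ (Γ : Set (G × H))))⁻¹)).Finite := by
  intro B hB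
  have hK1 : IsCompact (closure B) := hB.isCompact_closure
  have hK2 : IsCompact (closure W * (closure W)⁻¹) := hWrc.mul hWrc.inv
  have hK : IsCompact (closure B ×ˢ (closure W * (closure W)⁻¹)) := hK1.prod hK2
  have hΓclosed : IsClosed (Γ : Set (G × H)) := Subgroup.isClosed_of_discrete
  have hfin : ((Γ : Set (G × H)) ∩ (closure B ×ˢ (closure W * (closure W)⁻¹))).Finite := by
    have hc : IsCompact ((Γ : Set (G × H)) ∩ (closure B ×ˢ (closure W * (closure W)⁻¹))) :=
      hK.inter_left hΓclosed
    have hd : DiscreteTopology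
        (((Γ : Set (G × H)) ∩ (closure B ×ˢ (closure W * (closure W)⁻¹))) : Set (G × H)) :=
      DiscreteTopology.of_subset (inferInstance : DiscreteTopology Γ) Set.inter_subset_left
    exact hc.finite (isDiscrete_iff_discreteTopology.mpr hd)
  refine ((hfin.image Prod.fst).subset ?_)
  rintro g ⟨hgB, hgΛ⟩
  obtain ⟨a, ha, b, hb, rfl⟩ := hgΛ
  rw [Set.mem_inv] at hb
  obtain ⟨⟨g₁, h₁⟩, ⟨⟨-, hh₁⟩, hγ₁⟩, rfl⟩ := ha
  obtain ⟨⟨g₂, h₂⟩, ⟨⟨-, hh₂⟩, hγ₂⟩, hb2⟩ := hb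
  simp only at hb2
  have hbinv : b = g₂⁻¹ := by rw [hb2, inv_inv]
  subst hbinv
  refine ⟨(g₁, h₁) * (g₂, h₂)⁻¹, ⟨mul_mem hγ₁ (inv_mem hγ₂), ?_, ?_⟩, rfl⟩
  · exact subset_closure hgB
  · exact Set.mul_mem_mul (subset_closure hh₁) (Set.inv_mem_inv.mpr (subset_closure hh₂))
end

section
/- Let G and H be lcsc groups, each with a right-invariant, proper metric compatible with its topology, let μ_G be a right-invariant Haar measure on G, let Γ ⊆ G × H be a uniform lattice, and let A ⊆ H be a nonempty bounded set. Then there exist constants k₂ > 0 and C > 0 such that for all r > 0 the number of lattice points satisfies |(B_r^G(e) × A) ∩ Γ| ≤ C · μ_G(B_{r+k₂}^G(e)). -/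
open Pointwise

open MeasureTheory Metric ENNReal

theorem growth_pack_lemma {G : Type*} [Group G] [MetricSpace G] [IsTopologicalGroup G]
    [MeasurableSpace G] [BorelSpace G]
    (hinvG : ∀ x y g : G, dist (x * g) (y * g) = dist x y)
    (μ : Measure G) [Measure.IsMulRightInvariant μ]
    (ε r : ℝ) (hε : 0 < ε)
    (T : Finset G) (hTr : ∀ x ∈ T, x ∈ ball (1:G) r)
    (hsep : ∀ x ∈ T, ∀ y ∈ T, x ≠ y → ε ≤ dist x y) :
    (T.card : ℝ≥0∞) * μ (ball (1:G) (ε/2)) ≤ μ (ball (1:G) (r + ε)) := by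
  have hball : ∀ x : G, ∀ ρ : ℝ, ball x ρ = (fun y => y * x⁻¹) ⁻¹' (ball (1:G) ρ) := by
    intro x ρ
    ext y
    simp only [Set.mem_preimage, mem_ball]
    have : dist (y * x⁻¹) 1 = dist y x := by
      have := hinvG (y * x⁻¹) 1 x
      simpa [mul_assoc] using this.symm
    rw [this]
  have hmeas : ∀ x : G, μ (ball x (ε/2)) = μ (ball (1:G) (ε/2)) := by
    intro x
    rw [hball x (ε/2)]
    exact measure_preimage_mul_right μ x⁻¹ _
  have hdisj : (T : Set G).PairwiseDisjoint (fun x => ball x (ε/2)) := by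
    intro x hx y hy hxy
    apply Set.disjoint_left.2
    intro z hzx hzy
    have h1 : dist x y ≤ dist x z + dist z y := dist_triangle _ _ _
    have hx' : dist x z < ε/2 := by rw [dist_comm]; exact hzx
    have hy' : dist z y < ε/2 := by simpa [dist_comm] using hzy
    have := hsep x hx y hy hxy
    linarith
  calc (T.card : ℝ≥0∞) * μ (ball (1:G) (ε/2))
      = ∑ x ∈ T, μ (ball x (ε/2)) := by
        rw [Finset.sum_congr rfl fun x _ => hmeas x, Finset.sum_const, nsmul_eq_mul]
    _ = μ (⋃ x ∈ T, ball x (ε/2)) := by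
        rw [measure_biUnion_finset hdisj fun x _ => measurableSet_ball]
    _ ≤ μ (ball (1:G) (r + ε)) := by
        apply measure_mono
        intro z hz
        simp only [Set.mem_iUnion] at hz
        obtain ⟨x, hx, hzx⟩ := hz
        have h1 : dist x 1 < r := hTr x hx
        have h2 : dist z x < ε/2 := hzx
        have : dist z 1 ≤ dist z x + dist x 1 := dist_triangle _ _ _
        simp only [mem_ball]
        linarith

/-- Growth lemma, upper bound.  Let `G` and `H` be lcsc groups, each with a
right-invariant, proper, compatible metric, `μ` a right-invariant Haar measure on `G`,
`Γ ⊆ G × H` a uniform lattice, and `A ⊆ H` a nonempty bounded set.  Then there exist constants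
`k₂ > 0` and `C > 0` such that for all `r > 0`,
`|(B_r^G(e) × A) ∩ Γ| ≤ C · μ(B_{r+k₂}^G(e))`. -/
theorem growth_lemma_upper
    {G H : Type*}
    [Group G] [MetricSpace G] [IsTopologicalGroup G] [ProperSpace G] [SecondCountableTopology G]
    [Group H] [MetricSpace H] [IsTopologicalGroup H] [ProperSpace H] [SecondCountableTopology H]
    [MeasurableSpace G] [BorelSpace G]
    (hinvG : ∀ x y g : G, dist (x * g) (y * g) = dist x y)
    (hinvH : ∀ x y g : H, dist (x * g) (y * g) = dist x y)
    (μ : MeasureTheory.Measure G)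
    [MeasureTheory.Measure.IsMulRightInvariant μ]
    [MeasureTheory.IsFiniteMeasureOnCompacts μ]
    [MeasureTheory.Measure.IsOpenPosMeasure μ]
    (Γ : Subgroup (G × H)) [DiscreteTopology Γ]
    (hcocompact : ∃ C : Set (G × H), IsCompact C ∧ C * (Γ : Set (G × H)) = Set.univ)
    (A : Set H) (hAne : A.Nonempty) (hAbdd : Bornology.IsBounded A) :
    ∃ k₂ : ℝ, 0 < k₂ ∧ ∃ C : ℝ, 0 < C ∧ ∀ r : ℝ, 0 < r →
      (Nat.card ↥((Metric.ball (1 : G) r ×ˢ A) ∩ (Γ : Set (G × H))) : ℝ)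
        ≤ C * (μ (Metric.ball (1 : G) (r + k₂))).toReal := by
  classical
  -- product metric is right-invariant
  have hinvP : ∀ x y g : G × H, dist (x * g) (y * g) = dist x y := by
    intro x y g
    simp [Prod.dist_eq, hinvG, hinvH]
  -- separation constant from discreteness
  obtain ⟨ε, hε, hsep1⟩ : ∃ ε > 0, ∀ γ : G × H, γ ∈ Γ → γ ≠ 1 → ε ≤ dist γ 1 := by
    have h1 : ({(1 : Γ)} : Set Γ) ∈ nhds (1 : Γ) := by
      simp [nhds_discrete]
    rw [nhds_induced] at h1
    obtain ⟨U, hU, hUsub⟩ := h1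
    obtain ⟨ε, hε, hball⟩ := Metric.mem_nhds_iff.1 hU
    refine ⟨ε, hε, fun γ hγ hne => ?_⟩
    by_contra hlt
    push_neg at hlt
    have : γ ∈ U := hball (by simpa [mem_ball] using hlt)
    have : (⟨γ, hγ⟩ : Γ) ∈ ((↑) : Γ → G × H) ⁻¹' U := this
    have := hUsub this
    simp only [Set.mem_singleton_iff] at this
    exact hne (by simpa using congrArg Subtype.val this)
  -- pairwise separation
  have hsep : ∀ γ ∈ Γ, ∀ γ' ∈ Γ, γ ≠ γ' → ε ≤ dist γ γ' := by
    intro γ hγ γ' hγ' hne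
    have h1 : γ * γ'⁻¹ ∈ Γ := Γ.mul_mem hγ (Γ.inv_mem hγ')
    have h2 : γ * γ'⁻¹ ≠ 1 := by
      intro h; exact hne (by rw [← mul_inv_cancel γ'] at h; exact mul_right_cancel h ▸ rfl)
    have h3 := hsep1 _ h1 h2
    have h4 : dist (γ * γ'⁻¹) 1 = dist γ γ' := by
      have := hinvP (γ * γ'⁻¹) 1 γ'
      simpa [mul_assoc] using this.symm
    linarith [h4 ▸ h3]
  -- cover closure of A by finitely many balls of radius ε/3
  have hKcomp : IsCompact (closure A) := hAbdd.isCompact_closure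
  obtain ⟨t, ht⟩ : ∃ t : Finset H, closure A ⊆ ⋃ a ∈ t, ball a (ε/3) := by
    have hcov : closure A ⊆ ⋃ a : H, ball a (ε/3) := by
      intro x _
      exact Set.mem_iUnion.2 ⟨x, mem_ball_self (by linarith)⟩
    exact hKcomp.elim_finite_subcover _ (fun a => isOpen_ball) hcov
  -- the small ball measure
  set m : ℝ≥0∞ := μ (ball (1:G) (ε/2)) with hm
  have hm0 : m ≠ 0 :=
    (isOpen_ball.measure_pos μ (nonempty_ball.2 (by linarith))).ne'
  have hmtop : m ≠ ⊤ :=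
    ((measure_mono ball_subset_closedBall).trans_lt
      (isCompact_closedBall (1:G) (ε/2)).measure_lt_top).ne
  have hmR : 0 < m.toReal := ENNReal.toReal_pos hm0 hmtop
  refine ⟨ε, hε, (t.card + 1) / m.toReal, by positivity, fun r hr => ?_⟩
  set S : Set (G × H) := (ball (1 : G) r ×ˢ A) ∩ (Γ : Set (G × H)) with hS
  by_cases hfin : S.Finite
  · -- main case
    set F : Finset (G × H) := hfin.toFinset with hF
    have hcard : Nat.card ↥S = F.card := by
      rw [Nat.card_coe_set_eq, Set.ncard_eq_toFinset_card S hfin]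
    -- covering by classes
    have hcover : F ⊆ t.biUnion (fun a => F.filter (fun γ => γ.2 ∈ ball a (ε/3))) := by
      intro γ hγ
      have hγS : γ ∈ S := hfin.mem_toFinset.1 hγ
      have hA : γ.2 ∈ closure A := subset_closure hγS.1.2
      obtain ⟨a, ha, hb⟩ := Set.mem_iUnion₂.1 (ht hA)
      exact Finset.mem_biUnion.2 ⟨a, ha, Finset.mem_filter.2 ⟨hγ, hb⟩⟩
    have hMtop : μ (ball (1:G) (r + ε)) ≠ ⊤ :=
      ((measure_mono ball_subset_closedBall).trans_lt
        (isCompact_closedBall (1:G) (r + ε)).measure_lt_top).ne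
    -- per class bound
    have hclass : ∀ a ∈ t, ((F.filter (fun γ => γ.2 ∈ ball a (ε/3))).card : ℝ≥0∞) * m
        ≤ μ (ball (1:G) (r + ε)) := by
      intro a _
      set Fa := F.filter (fun γ => γ.2 ∈ ball a (ε/3)) with hFa
      have hmemS : ∀ γ ∈ Fa, γ ∈ S := fun γ hγ =>
        hfin.mem_toFinset.1 (Finset.mem_filter.1 hγ).1
      have hmemB : ∀ γ ∈ Fa, γ.2 ∈ ball a (ε/3) := fun γ hγ =>
        (Finset.mem_filter.1 hγ).2
      have hsnd : ∀ γ ∈ Fa, ∀ γ' ∈ Fa, dist γ.2 γ'.2 < ε := by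
        intro γ hγ γ' hγ'
        have h1 := hmemB γ hγ
        have h2 := hmemB γ' hγ'
        rw [mem_ball] at h1 h2
        have := dist_triangle γ.2 a γ'.2
        rw [dist_comm γ'.2 a] at h2
        linarith
      have hinj : Set.InjOn Prod.fst (Fa : Set (G × H)) := by
        intro γ hγ γ' hγ' hfst
        by_contra hne
        have h1 := hsep γ (hmemS γ hγ).2 γ' (hmemS γ' hγ').2 hne
        have h2 := hsnd γ hγ γ' hγ'
        rw [Prod.dist_eq, hfst, dist_self] at h1
        have := le_max_iff.1 h1
        rcases this with h | h
        · linarith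
        · linarith
      set Ta : Finset G := Fa.image Prod.fst with hTa
      have hcardeq : Fa.card = Ta.card := (Finset.card_image_of_injOn hinj).symm
      have hTr : ∀ x ∈ Ta, x ∈ ball (1:G) r := by
        intro x hx
        obtain ⟨γ, hγ, rfl⟩ := Finset.mem_image.1 hx
        exact (hmemS γ hγ).1.1
      have hTsep : ∀ x ∈ Ta, ∀ y ∈ Ta, x ≠ y → ε ≤ dist x y := by
        intro x hx y hy hxy
        obtain ⟨γ, hγ, rfl⟩ := Finset.mem_image.1 hx
        obtain ⟨γ', hγ', rfl⟩ := Finset.mem_image.1 hy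
        have hne : γ ≠ γ' := fun h => hxy (by rw [h])
        have h1 := hsep γ (hmemS γ hγ).2 γ' (hmemS γ' hγ').2 hne
        have h2 := hsnd γ hγ γ' hγ'
        rw [Prod.dist_eq] at h1
        rcases le_max_iff.1 h1 with h | h
        · exact h
        · linarith
      rw [hcardeq]
      exact growth_pack_lemma hinvG μ ε r hε Ta hTr hTsep
    -- sum the class bounds
    have hsum : (F.card : ℝ≥0∞) * m ≤ (t.card : ℝ≥0∞) * μ (ball (1:G) (r + ε)) := by
      calc (F.card : ℝ≥0∞) * m
          ≤ ((∑ a ∈ t, (F.filter (fun γ => γ.2 ∈ ball a (ε/3))).card : ℕ) : ℝ≥0∞) * m := by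
            gcongr
            exact_mod_cast (Finset.card_le_card hcover).trans (Finset.card_biUnion_le)
        _ = ∑ a ∈ t, ((F.filter (fun γ => γ.2 ∈ ball a (ε/3))).card : ℝ≥0∞) * m := by
            push_cast
            rw [Finset.sum_mul]
        _ ≤ ∑ a ∈ t, μ (ball (1:G) (r + ε)) := Finset.sum_le_sum hclass
        _ = (t.card : ℝ≥0∞) * μ (ball (1:G) (r + ε)) := by
            rw [Finset.sum_const, nsmul_eq_mul]
    -- convert to reals
    have hRHSne : (t.card : ℝ≥0∞) * μ (ball (1:G) (r + ε)) ≠ ⊤ :=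
      ENNReal.mul_ne_top (by simp) hMtop
    have hreal := ENNReal.toReal_mono hRHSne hsum
    rw [ENNReal.toReal_mul, ENNReal.toReal_mul, ENNReal.toReal_natCast,
      ENNReal.toReal_natCast] at hreal
    rw [hcard]
    rw [div_mul_eq_mul_div, le_div_iff₀ hmR]
    calc (F.card : ℝ) * m.toReal
        ≤ (t.card : ℝ) * (μ (ball (1:G) (r + ε))).toReal := hreal
      _ ≤ ((t.card : ℝ) + 1) * (μ (ball (1:G) (r + ε))).toReal := by
          have : (0:ℝ) ≤ (μ (ball (1:G) (r + ε))).toReal := ENNReal.toReal_nonneg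
          nlinarith
  · -- infinite case: Nat.card = 0
    rw [Nat.card_coe_set_eq, Set.Infinite.ncard hfin, Nat.cast_zero]
    positivity
end

section
/- Let G and H be lcsc groups, each with a right-invariant, proper metric compatible with its topology, let μ_G be a right-invariant Haar measure on G, let Γ ⊆ G × H be a uniform lattice such that π_H(Γ) is dense in H, and let A ⊆ H be a nonempty bounded open set. Then there exist constants k₁ > 0 and C' > 0 such that for all r > k₁ the number of lattice points satisfies |(B_r^G(e) × A) ∩ Γ| ≥ C' · μ_G(B_{r−k₁}^G(e)). -/
open Pointwise

/-- Growth lemma, lower bound.  Let `G` and `H` be lcsc groups, each with a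
right-invariant, proper, compatible metric, `μ` a right-invariant Haar measure on `G`,
`Γ ⊆ G × H` a uniform lattice with `π_H(Γ)` dense in `H`, and `A ⊆ H` a nonempty bounded open
set.  Then there exist constants `k₁ > 0` and `C' > 0` such that for all `r > k₁`,
`|(B_r^G(e) × A) ∩ Γ| ≥ C' · μ(B_{r−k₁}^G(e))`. -/
theorem growth_lemma_lower
    {G H : Type*}
    [Group G] [MetricSpace G] [IsTopologicalGroup G] [ProperSpace G] [SecondCountableTopology G]
    [Group H] [MetricSpace H] [IsTopologicalGroup H] [ProperSpace H] [SecondCountableTopology H]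
    [MeasurableSpace G] [BorelSpace G]
    (hinvG : ∀ x y g : G, dist (x * g) (y * g) = dist x y)
    (hinvH : ∀ x y g : H, dist (x * g) (y * g) = dist x y)
    (μ : MeasureTheory.Measure G)
    [MeasureTheory.Measure.IsMulRightInvariant μ]
    [MeasureTheory.IsFiniteMeasureOnCompacts μ]
    [MeasureTheory.Measure.IsOpenPosMeasure μ]
    (Γ : Subgroup (G × H)) [DiscreteTopology Γ]
    (hcocompact : ∃ C : Set (G × H), IsCompact C ∧ C * (Γ : Set (G × H)) = Set.univ)
    (hdense : Dense (Prod.snd '' (Γ : Set (G × H))))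
    (A : Set H) (hAne : A.Nonempty) (hAbdd : Bornology.IsBounded A) (hAopen : IsOpen A) :
    ∃ k₁ : ℝ, 0 < k₁ ∧ ∃ C' : ℝ, 0 < C' ∧ ∀ r : ℝ, k₁ < r →
      C' * (μ (Metric.ball (1 : G) (r - k₁))).toReal
        ≤ (Nat.card ↥((Metric.ball (1 : G) r ×ˢ A) ∩ (Γ : Set (G × H))) : ℝ) := by
  classical
  obtain ⟨C, hCcomp, hCΓ⟩ := hcocompact
  -- bound on C⁻¹
  obtain ⟨R₀', hR₀'⟩ := (hCcomp.inv.isBounded).subset_ball (1 : G × H)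
  set R₀ : ℝ := max R₀' 1 with hR₀def
  have hR₀pos : (0:ℝ) < R₀ := lt_of_lt_of_le one_pos (le_max_right _ _)
  have hCinv : ∀ c ∈ C, dist (c⁻¹) (1 : G × H) ≤ R₀ := by
    intro c hc
    have : c⁻¹ ∈ Metric.ball (1 : G × H) R₀' := hR₀' (Set.inv_mem_inv.2 hc)
    exact le_trans (le_of_lt (Metric.mem_ball.1 this)) (le_max_left _ _)
  -- relative density of Γ
  have hreldense : ∀ x : G × H, ∃ γ ∈ (Γ : Set (G × H)), dist γ x ≤ R₀ := by
    intro x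
    have hx : x ∈ C * (Γ : Set (G × H)) := by rw [hCΓ]; trivial
    obtain ⟨c, hc, γ, hγ, hcγ⟩ := Set.mem_mul.1 hx
    refine ⟨γ, hγ, ?_⟩
    have hγeq : γ = c⁻¹ * x := by rw [← hcγ]; group
    have : dist γ x = dist (c⁻¹) (1 : G × H) := by
      rw [hγeq]
      have h1 : dist (c⁻¹ * x) x = dist (c⁻¹ * x) (1 * x) := by rw [one_mul]
      rw [h1, Prod.dist_eq, Prod.dist_eq]
      simp only [Prod.fst_mul, Prod.snd_mul, Prod.fst_one, Prod.snd_one]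
      rw [hinvG, hinvH]
    rw [this]
    exact hCinv c hc
  obtain ⟨a, ha⟩ := hAne
  -- correctors: for each h in the compact set K, find γ ∈ Γ with γ.2 * h ∈ A,
  -- with uniformly bounded first component.
  set K : Set H := Metric.closedBall a R₀ with hKdef
  have hKcomp : IsCompact K := isCompact_closedBall a R₀
  have hcorr : ∀ h : K, ∃ γ ∈ (Γ : Set (G × H)), γ.2 * (h : H) ∈ A := by
    intro h
    have hopen : IsOpen ((fun y : H => y * (h : H)) ⁻¹' A) :=
      hAopen.preimage (continuous_mul_right _)
    have hne : ((fun y : H => y * (h : H)) ⁻¹' A).Nonempty := by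
      refine ⟨a * (h : H)⁻¹, ?_⟩
      simp only [Set.mem_preimage, inv_mul_cancel_right]
      exact ha
    obtain ⟨y, hy, hyU⟩ := hdense.exists_mem_open hopen hne
    obtain ⟨γ, hγΓ, hγy⟩ := hy
    exact ⟨γ, hγΓ, by rwa [hγy]⟩
  choose f hfΓ hfA using hcorr
  have hcover : K ⊆ ⋃ i : K, (fun y : H => (f i).2 * y) ⁻¹' A := by
    intro h hh
    exact Set.mem_iUnion.2 ⟨⟨h, hh⟩, hfA ⟨h, hh⟩⟩
  obtain ⟨t, ht⟩ := hKcomp.elim_finite_subcover _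
    (fun i : K => hAopen.preimage (continuous_mul_left (f i).2)) hcover
  obtain ⟨M, hM⟩ : ∃ M : ℝ, ∀ i ∈ t, dist (f i).1 1 ≤ M := by
    obtain ⟨M, hM⟩ := (t.image fun i => dist (f i).1 1).finite_toSet.bddAbove
    exact ⟨M, fun i hi => hM (Finset.mem_coe.2 (Finset.mem_image_of_mem _ hi))⟩
  have hMnn : ∀ h ∈ K, ∃ γ ∈ (Γ : Set (G × H)), γ.2 * h ∈ A ∧ dist γ.1 1 ≤ M := by
    intro h hh
    have := ht hh
    simp only [Set.mem_iUnion, Set.mem_preimage] at this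
    obtain ⟨i, hit, hi⟩ := this
    exact ⟨f i, hfΓ i, hi, hM i hit⟩
  -- the key relative density statement with H-component in A
  set k₁ : ℝ := R₀ + max M 0 + 1 with hk₁def
  have hk₁pos : (0:ℝ) < k₁ := by positivity
  have hkey : ∀ g : G, ∃ γ ∈ (Γ : Set (G × H)), γ.2 ∈ A ∧ dist γ.1 g < k₁ := by
    intro g
    obtain ⟨γ₀, hγ₀Γ, hγ₀d⟩ := hreldense (g, a)
    have hγ₀H : γ₀.2 ∈ K := by
      rw [hKdef, Metric.mem_closedBall]
      calc dist γ₀.2 a ≤ dist γ₀ (g, a) := by rw [Prod.dist_eq]; exact le_max_right _ _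
        _ ≤ R₀ := hγ₀d
    obtain ⟨γ', hγ'Γ, hγ'A, hγ'M⟩ := hMnn γ₀.2 hγ₀H
    refine ⟨γ' * γ₀, Γ.mul_mem hγ'Γ hγ₀Γ, hγ'A, ?_⟩
    have h1 : dist (γ' * γ₀).1 γ₀.1 = dist γ'.1 1 := by
      have : dist (γ'.1 * γ₀.1) (1 * γ₀.1) = dist γ'.1 1 := hinvG _ _ _
      simpa using this
    have h2 : dist γ₀.1 g ≤ R₀ := by
      calc dist γ₀.1 g ≤ dist γ₀ (g, a) := by rw [Prod.dist_eq]; exact le_max_left _ _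
        _ ≤ R₀ := hγ₀d
    calc dist (γ' * γ₀).1 g ≤ dist (γ' * γ₀).1 γ₀.1 + dist γ₀.1 g := dist_triangle _ _ _
      _ ≤ dist γ'.1 1 + R₀ := by rw [h1]; exact add_le_add_right h2 _
      _ ≤ max M 0 + R₀ := add_le_add_left (le_trans hγ'M (le_max_left _ _)) _
      _ < k₁ := by rw [hk₁def]; linarith
  -- the measure of the ball of radius k₁
  set V : ENNReal := μ (Metric.ball (1 : G) k₁) with hVdef
  have hVpos : 0 < V := Metric.measure_ball_pos μ 1 hk₁pos
  have hVlt : V < ⊤ := MeasureTheory.measure_ball_lt_top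
  have hVR : 0 < V.toReal := ENNReal.toReal_pos hVpos.ne' hVlt.ne
  refine ⟨k₁, hk₁pos, (V.toReal)⁻¹, inv_pos.2 hVR, ?_⟩
  intro r hr
  set S : Set (G × H) := (Metric.ball (1 : G) r ×ˢ A) ∩ (Γ : Set (G × H)) with hSdef
  -- S is finite
  have hSfin : S.Finite := by
    have hTcomp : IsCompact ((Metric.closedBall (1 : G) r ×ˢ closure A) ∩ (Γ : Set (G × H))) :=
      ((isCompact_closedBall _ _).prod hAbdd.isCompact_closure).inter_right
        Subgroup.isClosed_of_discrete
    have hdisc : DiscreteTopology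
        (((Metric.closedBall (1 : G) r ×ˢ closure A) ∩ (Γ : Set (G × H))) : Set (G × H)) :=
      DiscreteTopology.of_subset (inferInstance : DiscreteTopology Γ) Set.inter_subset_right
    have hTfin := hTcomp.finite (isDiscrete_iff_discreteTopology.2 hdisc)
    refine hTfin.subset ?_
    exact Set.inter_subset_inter_left _
      (Set.prod_mono Metric.ball_subset_closedBall subset_closure)
  set F : Finset (G × H) := hSfin.toFinset with hFdef
  -- covering
  have hcov : Metric.ball (1 : G) (r - k₁) ⊆ ⋃ p ∈ F, Metric.ball p.1 k₁ := by
    intro g hg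
    obtain ⟨γ, hγΓ, hγA, hγd⟩ := hkey g
    have hγball : γ.1 ∈ Metric.ball (1 : G) r := by
      rw [Metric.mem_ball] at hg ⊢
      calc dist γ.1 1 ≤ dist γ.1 g + dist g 1 := dist_triangle _ _ _
        _ < k₁ + (r - k₁) := add_lt_add hγd hg
        _ = r := by ring
    have hγS : γ ∈ S := ⟨Set.mk_mem_prod hγball hγA, hγΓ⟩
    refine Set.mem_biUnion (hSfin.mem_toFinset.2 hγS) ?_
    rw [Metric.mem_ball, dist_comm]
    exact hγd
  -- measure bound
  have hballmeas : ∀ p : G × H, μ (Metric.ball p.1 k₁) = V := by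
    intro p
    have : Metric.ball p.1 k₁ = (fun x => x * p.1⁻¹) ⁻¹' Metric.ball (1 : G) k₁ := by
      ext x
      simp only [Set.mem_preimage, Metric.mem_ball]
      have h := hinvG x p.1 p.1⁻¹
      rw [mul_inv_cancel] at h
      rw [h]
    rw [this, MeasureTheory.measure_preimage_mul_right]
  have hmeas : μ (Metric.ball (1 : G) (r - k₁)) ≤ F.card * V := by
    calc μ (Metric.ball (1 : G) (r - k₁)) ≤ μ (⋃ p ∈ F, Metric.ball p.1 k₁) :=
        MeasureTheory.measure_mono hcov
      _ ≤ ∑ p ∈ F, μ (Metric.ball p.1 k₁) := MeasureTheory.measure_biUnion_finset_le _ _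
      _ = ∑ p ∈ F, V := Finset.sum_congr rfl fun p _ => hballmeas p
      _ = F.card * V := by rw [Finset.sum_const, nsmul_eq_mul]
  have hcard : (Nat.card ↥S : ℝ) = F.card := by
    rw [Nat.card_coe_set_eq, Set.ncard_eq_toFinset_card _ hSfin]
  rw [hcard]
  have hmeasR : (μ (Metric.ball (1 : G) (r - k₁))).toReal ≤ F.card * V.toReal := by
    have hfin : (F.card : ENNReal) * V ≠ ⊤ := ENNReal.mul_ne_top (by simp) hVlt.ne
    have := ENNReal.toReal_mono hfin hmeas
    rwa [ENNReal.toReal_mul, ENNReal.toReal_natCast] at this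
  rw [inv_mul_le_iff₀ hVR]
  calc (μ (Metric.ball (1 : G) (r - k₁))).toReal ≤ F.card * V.toReal := hmeasR
    _ = V.toReal * F.card := mul_comm _ _
end

section
/- Let G and H be lcsc groups, each with a right-invariant, proper metric compatible with its topology, let μ_G be a right-invariant Haar measure on G, let Γ ⊆ G × H be a uniform lattice such that π_H(Γ) is dense in H, and let A ⊆ H be a nonempty bounded open set. If G has exact polynomial growth of degree κ with respect to its metric, then |(B_r^G(e) × A) ∩ Γ| ≍ r^κ, i.e. there exist constants 0 < a ≤ b and r₀ > 0 such that a·r^κ ≤ |(B_r^G(e) × A) ∩ Γ| ≤ b·r^κ for all r ≥ r₀. -/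
open Pointwise MeasureTheory Metric ENNReal

lemma ball_translate {G : Type*} [Group G] [MetricSpace G]
    (hinv : ∀ x y g : G, dist (x * g) (y * g) = dist x y) (x : G) (ρ : ℝ) :
    ball x ρ = (fun y => y * x⁻¹) ⁻¹' ball (1 : G) ρ := by
  ext y
  simp only [mem_ball, Set.mem_preimage]
  rw [show dist y x = dist (y * x⁻¹) 1 by rw [← hinv y x x⁻¹, mul_inv_cancel]]

lemma meas_ball_translate {G : Type*} [Group G] [MetricSpace G] [IsTopologicalGroup G]
    [MeasurableSpace G] [BorelSpace G]
    (hinv : ∀ x y g : G, dist (x * g) (y * g) = dist x y)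
    (μ : Measure G) [μ.IsMulRightInvariant] (x : G) (ρ : ℝ) :
    μ (ball x ρ) = μ (ball (1 : G) ρ) := by
  rw [ball_translate hinv, measure_preimage_mul_right]

lemma finset_sep_count {G : Type*} [Group G] [MetricSpace G] [IsTopologicalGroup G]
    [MeasurableSpace G] [BorelSpace G]
    (hinv : ∀ x y g : G, dist (x * g) (y * g) = dist x y)
    (μ : Measure G) [μ.IsMulRightInvariant]
    {ε r : ℝ} (hε : 0 < ε) {F : Finset G} (hF : ∀ x ∈ F, x ∈ ball (1:G) r)
    (hsep : ∀ x ∈ F, ∀ y ∈ F, x ≠ y → ε ≤ dist x y) :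
    (F.card : ℝ≥0∞) * μ (ball (1:G) (ε/2)) ≤ μ (ball (1:G) (r + ε)) := by
  have hd : (↑F : Set G).PairwiseDisjoint (fun s => ball s (ε/2)) := by
    intro x hx y hy hxy
    exact ball_disjoint_ball (by linarith [hsep x hx y hy hxy])
  have hsum : μ (⋃ s ∈ F, ball s (ε/2)) = ∑ s ∈ F, μ (ball s (ε/2)) :=
    measure_biUnion_finset hd (fun s _ => measurableSet_ball)
  have hsub : (⋃ s ∈ F, ball s (ε/2)) ⊆ ball (1:G) (r + ε) := by
    intro y hy
    simp only [Set.mem_iUnion] at hy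
    obtain ⟨s, hs, hys⟩ := hy
    have h1 := hF s hs
    rw [mem_ball] at *
    calc dist y 1 ≤ dist y s + dist s 1 := dist_triangle _ _ _
      _ < ε/2 + r := by linarith
      _ ≤ r + ε := by linarith
  calc (F.card : ℝ≥0∞) * μ (ball (1:G) (ε/2)) = ∑ _s ∈ F, μ (ball (1:G) (ε/2)) := by
        rw [Finset.sum_const, nsmul_eq_mul]
    _ = ∑ s ∈ F, μ (ball s (ε/2)) := by
        exact Finset.sum_congr rfl fun s _ => (meas_ball_translate hinv μ s _).symm
    _ = μ (⋃ s ∈ F, ball s (ε/2)) := hsum.symm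
    _ ≤ μ (ball (1:G) (r + ε)) := measure_mono hsub

lemma sep_count {G : Type*} [Group G] [MetricSpace G] [IsTopologicalGroup G] [ProperSpace G]
    [MeasurableSpace G] [BorelSpace G]
    (hinv : ∀ x y g : G, dist (x * g) (y * g) = dist x y)
    (μ : Measure G) [μ.IsMulRightInvariant] [IsFiniteMeasureOnCompacts μ] [μ.IsOpenPosMeasure]
    {ε r : ℝ} (hε : 0 < ε) {S : Set G} (hS : S ⊆ ball (1:G) r)
    (hsep : ∀ x ∈ S, ∀ y ∈ S, x ≠ y → ε ≤ dist x y) :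
    S.Finite ∧ (Nat.card S : ℝ) * (μ (ball (1:G) (ε/2))).toReal
      ≤ (μ (ball (1:G) (r + ε))).toReal := by
  set m := μ (ball (1:G) (ε/2)) with hm_def
  set M := μ (ball (1:G) (r + ε)) with hM_def
  have hm0 : m ≠ 0 := (measure_ball_pos μ _ (by linarith)).ne'
  have hmt : m ≠ ⊤ := measure_ball_lt_top.ne
  have hMt : M ≠ ⊤ := measure_ball_lt_top.ne
  have key : ∀ F : Finset G, ↑F ⊆ S → (F.card : ℝ≥0∞) * m ≤ M := by
    intro F hF
    exact finset_sep_count hinv μ hε (fun x hx => hS (hF hx))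
      (fun x hx y hy hxy => hsep x (hF hx) y (hF hy) hxy)
  have hfin : S.Finite := by
    by_contra hinf
    have hinf : S.Infinite := hinf
    obtain ⟨F, hFS, hFcard⟩ := hinf.exists_subset_card_eq (⌈(M / m).toReal⌉₊ + 1)
    have h1 := key F hFS
    have h2 : (F.card : ℝ≥0∞) ≤ M / m := ENNReal.le_div_iff_mul_le (Or.inl hm0) (Or.inl hmt) |>.2 h1
    have h3 : (M / m) ≠ ⊤ := (ENNReal.div_lt_top hMt hm0).ne
    have h4 : (F.card : ℝ) ≤ (M / m).toReal := by
      have := ENNReal.toReal_mono h3 h2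
      simpa using this
    rw [hFcard] at h4
    push_cast at h4
    have h7 : (M/m).toReal ≤ (⌈(M/m).toReal⌉₊ : ℝ) := Nat.le_ceil _
    linarith
  have h1 := key hfin.toFinset (by simp)
  have hcard : hfin.toFinset.card = Nat.card S := by
    rw [Nat.card_eq_card_finite_toFinset hfin]
  rw [hcard] at h1
  have h2 : ((Nat.card S : ℝ≥0∞) * m).toReal ≤ M.toReal :=
    ENNReal.toReal_mono hMt h1
  rw [ENNReal.toReal_mul, ENNReal.toReal_natCast] at h2
  exact ⟨hfin, h2⟩

lemma my_ncard_biUnion_le {α ι : Type*} (t : Finset ι) (f : ι → Set α) :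
    (⋃ i ∈ t, f i).ncard ≤ ∑ i ∈ t, (f i).ncard := by
  classical
  induction t using Finset.induction_on with
  | empty => simp
  | insert a s hnotmem ih =>
    rw [Finset.set_biUnion_insert, Finset.sum_insert hnotmem]
    exact le_trans (Set.ncard_union_le _ _) (by omega)

lemma cover_count {G : Type*} [Group G] [MetricSpace G] [IsTopologicalGroup G] [ProperSpace G]
    [MeasurableSpace G] [BorelSpace G]
    (hinv : ∀ x y g : G, dist (x * g) (y * g) = dist x y)
    (μ : Measure G) [μ.IsMulRightInvariant] [IsFiniteMeasureOnCompacts μ]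
    {R ρ : ℝ} {S : Set G} (hfin : S.Finite)
    (hcov : ball (1:G) ρ ⊆ ⋃ s ∈ S, ball s R) :
    (μ (ball (1:G) ρ)).toReal ≤ (S.ncard : ℝ) * (μ (ball (1:G) R)).toReal := by
  have h1 : μ (ball (1:G) ρ) ≤ ∑ s ∈ hfin.toFinset, μ (ball s R) := by
    refine le_trans (measure_mono ?_) (measure_biUnion_finset_le _ _)
    simpa using hcov
  have h2 : ∑ s ∈ hfin.toFinset, μ (ball s R) = (S.ncard : ℝ≥0∞) * μ (ball (1:G) R) := by
    rw [Finset.sum_congr rfl fun s _ => meas_ball_translate hinv μ s R,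
      Finset.sum_const, nsmul_eq_mul]
    rw [Set.ncard_eq_toFinset_card _ hfin]
  rw [h2] at h1
  have hfin' : (S.ncard : ℝ≥0∞) * μ (ball (1:G) R) ≠ ⊤ :=
    ENNReal.mul_ne_top (natCast_ne_top _) measure_ball_lt_top.ne
  have h3 := ENNReal.toReal_mono hfin' h1
  rwa [ENNReal.toReal_mul, ENNReal.toReal_natCast] at h3

lemma discrete_sep {G H : Type*} [Group G] [MetricSpace G] [Group H] [MetricSpace H]
    (hinvG : ∀ x y g : G, dist (x * g) (y * g) = dist x y)
    (hinvH : ∀ x y g : H, dist (x * g) (y * g) = dist x y)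
    (Γ : Subgroup (G × H)) [DiscreteTopology Γ] :
    ∃ ε : ℝ, 0 < ε ∧ ε ≤ 1 ∧ ∀ p ∈ (Γ : Set (G × H)), ∀ q ∈ (Γ : Set (G × H)), p ≠ q →
      ε ≤ dist p.1 q.1 ∨ ε ≤ dist p.2 q.2 := by
  have h1 : ({1} : Set Γ) ∈ nhds (1 : Γ) := by
    rw [nhds_discrete]; exact Filter.mem_pure.2 rfl
  rw [nhds_subtype] at h1
  obtain ⟨V, hV, hVsub⟩ := Filter.mem_comap.1 h1
  have hV' : V ∈ nhds ((1 : G), (1 : H)) := hV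
  rw [mem_nhds_prod_iff] at hV'
  obtain ⟨U, hU, W, hW, hUW⟩ := hV'
  obtain ⟨ε₁, hε₁, hUb⟩ := Metric.mem_nhds_iff.1 hU
  obtain ⟨ε₂, hε₂, hWb⟩ := Metric.mem_nhds_iff.1 hW
  refine ⟨min (min ε₁ ε₂) 1, by positivity, min_le_right _ _, ?_⟩
  intro p hp q hq hpq
  by_contra hcon
  push_neg at hcon
  obtain ⟨h1', h2'⟩ := hcon
  set d := p * q⁻¹ with hd
  have hdΓ : d ∈ Γ := Γ.mul_mem hp (Γ.inv_mem hq)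
  have hd1 : dist d.1 1 = dist p.1 q.1 := by
    have := hinvG p.1 q.1 q.1⁻¹
    simp only [mul_inv_cancel] at this
    rw [← this]; rfl
  have hd2 : dist d.2 1 = dist p.2 q.2 := by
    have := hinvH p.2 q.2 q.2⁻¹
    simp only [mul_inv_cancel] at this
    rw [← this]; rfl
  have hdU : d.1 ∈ U := hUb (by
    rw [mem_ball, hd1]
    exact lt_of_lt_of_le h1' (le_trans (min_le_left _ _) (min_le_left _ _)))
  have hdW : d.2 ∈ W := hWb (by
    rw [mem_ball, hd2]
    exact lt_of_lt_of_le h2' (le_trans (min_le_left _ _) (min_le_right _ _)))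
  have hdV : d ∈ V := hUW (Set.mk_mem_prod hdU hdW)
  have : (⟨d, hdΓ⟩ : Γ) ∈ ({1} : Set Γ) := hVsub hdV
  rw [Set.mem_singleton_iff] at this
  have : d = 1 := congrArg Subtype.val this
  exact hpq (by rwa [hd, mul_inv_eq_one] at this)

lemma rel_dense {G H : Type*} [Group G] [MetricSpace G] [IsTopologicalGroup G]
    [Group H] [MetricSpace H] [IsTopologicalGroup H]
    (hinvG : ∀ x y g : G, dist (x * g) (y * g) = dist x y)
    (hinvH : ∀ x y g : H, dist (x * g) (y * g) = dist x y)
    (Γ : Subgroup (G × H))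
    (hcocompact : ∃ C : Set (G × H), IsCompact C ∧ C * (Γ : Set (G × H)) = Set.univ)
    (hdense : Dense (Prod.snd '' (Γ : Set (G × H))))
    (A : Set H) (hAne : A.Nonempty) (hAopen : IsOpen A) :
    ∃ R : ℝ, 0 < R ∧ ∀ g : G, ∃ p ∈ (Γ : Set (G × H)), p.2 ∈ A ∧ dist p.1 g < R := by
  obtain ⟨a0, ha0⟩ := hAne
  obtain ⟨δ, hδ, hballA⟩ := Metric.isOpen_iff.1 hAopen a0 ha0
  obtain ⟨C, hC, hCΓ⟩ := hcocompact
  -- density: for each h, a lattice element with second coordinate δ/2-close to h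
  have hd : ∀ h : H, ∃ p : G × H, p ∈ (Γ : Set (G × H)) ∧ dist p.2 h < δ / 2 := by
    intro h
    have := Metric.mem_closure_iff.1 (hdense h) (δ / 2) (by linarith)
    obtain ⟨b, hb, hbd⟩ := this
    obtain ⟨p, hp, rfl⟩ := hb
    exact ⟨p, hp, by rwa [dist_comm]⟩
  choose γfun hγΓ hγd using hd
  -- compact image
  have hK : IsCompact (Prod.snd '' C) := hC.image continuous_snd
  have hcov : Prod.snd '' C ⊆ ⋃ h : H, ball h (δ / 2) := fun x _ =>
    Set.mem_iUnion.2 ⟨x, mem_ball_self (by linarith)⟩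
  obtain ⟨t', ht'⟩ := hK.elim_finite_subcover (fun h : H => ball h (δ / 2))
    (fun _ => isOpen_ball) hcov
  -- bound on first coordinates of chosen lattice elements
  obtain ⟨R₀, hR₀⟩ := ((t'.finite_toSet).image (fun h => dist (γfun h).1 1)).bddAbove
  have hR₀' : ∀ h ∈ t', dist (γfun h).1 1 ≤ R₀ := fun h hh => hR₀ ⟨h, hh, rfl⟩
  -- bound on inverses of first coordinates of C
  have hC₁ : IsCompact ((fun c : G × H => c.1⁻¹) '' C) :=
    hC.image (continuous_inv.comp continuous_fst)
  obtain ⟨ρ, hρ⟩ := hC₁.isBounded.subset_closedBall (1 : G)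
  set R := max R₀ 0 + max ρ 0 + 1 with hR
  refine ⟨R, by positivity, ?_⟩
  intro g
  have hmem : (g, a0) ∈ C * (Γ : Set (G × H)) := by rw [hCΓ]; trivial
  obtain ⟨cc, hcc, q, hq, hmul⟩ := Set.mem_mul.1 hmem
  have hqval : q = cc⁻¹ * (g, a0) := by rw [← hmul]; group
  have hc2K : cc.2 ∈ Prod.snd '' C := ⟨cc, hcc, rfl⟩
  obtain ⟨h, hht', hhb⟩ := Set.mem_iUnion₂.1 (ht' hc2K)
  set γ' := γfun h with hγ'
  have hclose : dist γ'.2 cc.2 < δ := by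
    have h1 := hγd h
    have h2 : dist h cc.2 < δ / 2 := by rw [dist_comm]; exact mem_ball.1 hhb
    calc dist γ'.2 cc.2 ≤ dist γ'.2 h + dist h cc.2 := dist_triangle _ _ _
      _ < δ := by linarith
  refine ⟨γ' * q, Γ.mul_mem (hγΓ h) hq, ?_, ?_⟩
  · -- second coordinate in A
    apply hballA
    rw [mem_ball]
    have hq2 : q.2 = cc.2⁻¹ * a0 := by rw [hqval]; rfl
    have : (γ' * q).2 = γ'.2 * (cc.2⁻¹ * a0) := by rw [← hq2]; rfl
    rw [this]
    have h3 := hinvH γ'.2 cc.2 (cc.2⁻¹ * a0)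
    have h4 : cc.2 * (cc.2⁻¹ * a0) = a0 := by group
    rw [h4] at h3
    rw [h3]
    exact hclose
  · -- first coordinate close to g
    have hq1 : q.1 = cc.1⁻¹ * g := by rw [hqval]; rfl
    have h5 : (γ' * q).1 = γ'.1 * cc.1⁻¹ * g := by
      show γ'.1 * q.1 = _
      rw [hq1, mul_assoc]
    rw [h5]
    have h6 := hinvG (γ'.1 * cc.1⁻¹) 1 g
    rw [one_mul] at h6
    rw [h6]
    have h7 := hinvG γ'.1 1 cc.1⁻¹
    rw [one_mul] at h7
    have h8 : dist (γ'.1 * cc.1⁻¹) 1 ≤ dist (γ'.1 * cc.1⁻¹) cc.1⁻¹ + dist cc.1⁻¹ 1 :=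
      dist_triangle _ _ _
    have h9 : dist cc.1⁻¹ (1 : G) ≤ ρ := by
      have : cc.1⁻¹ ∈ closedBall (1 : G) ρ := hρ ⟨cc, hcc, rfl⟩
      exact mem_closedBall.1 this
    have h10 : dist γ'.1 1 ≤ R₀ := hR₀' h hht'
    rw [h7] at h8
    have : dist (γ'.1 * cc.1⁻¹) 1 ≤ max R₀ 0 + max ρ 0 := by
      calc dist (γ'.1 * cc.1⁻¹) 1 ≤ dist γ'.1 1 + dist cc.1⁻¹ 1 := h8
        _ ≤ max R₀ 0 + max ρ 0 := add_le_add (le_max_of_le_left h10) (le_max_of_le_left h9)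
    rw [hR]; linarith

lemma upper_count {G H : Type*}
    [Group G] [MetricSpace G] [IsTopologicalGroup G] [ProperSpace G]
    [Group H] [MetricSpace H]
    [MeasurableSpace G] [BorelSpace G]
    (hinvG : ∀ x y g : G, dist (x * g) (y * g) = dist x y)
    (μ : Measure G) [μ.IsMulRightInvariant] [IsFiniteMeasureOnCompacts μ] [μ.IsOpenPosMeasure]
    (Γ : Subgroup (G × H)) {ε : ℝ} (hε : 0 < ε)
    (hsep : ∀ p ∈ (Γ : Set (G × H)), ∀ q ∈ (Γ : Set (G × H)), p ≠ q →
      ε ≤ dist p.1 q.1 ∨ ε ≤ dist p.2 q.2)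
    (A : Set H) {t : Finset H} (hcovA : A ⊆ ⋃ h ∈ t, ball h (ε / 2)) (r : ℝ) :
    (Metric.ball (1 : G) r ×ˢ A ∩ (Γ : Set (G × H))).Finite ∧
    (((Metric.ball (1 : G) r ×ˢ A ∩ (Γ : Set (G × H))).ncard : ℝ)
        * (μ (ball (1 : G) (ε / 2))).toReal
      ≤ (t.card : ℝ) * (μ (ball (1 : G) (r + ε))).toReal) := by
  classical
  set T := Metric.ball (1 : G) r ×ˢ A ∩ (Γ : Set (G × H)) with hT
  set Γj : H → Set (G × H) := fun j => {p ∈ T | p.2 ∈ ball j (ε / 2)} with hΓj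
  have key : ∀ j : H, Set.InjOn Prod.fst (Γj j) ∧ (Prod.fst '' Γj j).Finite ∧
      ((Prod.fst '' Γj j).ncard : ℝ) * (μ (ball (1 : G) (ε / 2))).toReal
        ≤ (μ (ball (1 : G) (r + ε))).toReal := by
    intro j
    have hdist2 : ∀ p ∈ Γj j, ∀ q ∈ Γj j, dist p.2 q.2 < ε := by
      intro p hp q hq
      calc dist p.2 q.2 ≤ dist p.2 j + dist j q.2 := dist_triangle _ _ _
        _ < ε / 2 + ε / 2 := add_lt_add hp.2 (by rw [dist_comm]; exact hq.2)
        _ = ε := by ring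
    have hinj : Set.InjOn Prod.fst (Γj j) := by
      intro p hp q hq hfst
      by_contra hpq
      rcases hsep p hp.1.2 q hq.1.2 hpq with h | h
      · rw [hfst, dist_self] at h; linarith
      · exact absurd (hdist2 p hp q hq) (not_lt.2 h)
    have hSsub : Prod.fst '' Γj j ⊆ ball (1 : G) r := by
      rintro x ⟨p, hp, rfl⟩
      exact hp.1.1.1
    have hSsep : ∀ x ∈ Prod.fst '' Γj j, ∀ y ∈ Prod.fst '' Γj j, x ≠ y → ε ≤ dist x y := by
      rintro x ⟨p, hp, rfl⟩ y ⟨q, hq, rfl⟩ hxy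
      have hpq : p ≠ q := fun h => hxy (by rw [h])
      rcases hsep p hp.1.2 q hq.1.2 hpq with h | h
      · exact h
      · exact absurd (hdist2 p hp q hq) (not_lt.2 h)
    obtain ⟨hfin, hcard⟩ := sep_count hinvG μ hε hSsub hSsep
    rw [Nat.card_coe_set_eq] at hcard
    exact ⟨hinj, hfin, hcard⟩
  have hΓjfin : ∀ j : H, (Γj j).Finite := fun j =>
    Set.Finite.of_finite_image (key j).2.1 (key j).1
  have hTsub : T ⊆ ⋃ j ∈ t, Γj j := by
    intro p hp
    obtain ⟨j, hjt, hjb⟩ := Set.mem_iUnion₂.1 (hcovA hp.1.2)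
    exact Set.mem_iUnion₂.2 ⟨j, hjt, hp, hjb⟩
  have hUfin : (⋃ j ∈ t, Γj j).Finite := Set.Finite.biUnion t.finite_toSet fun j _ => hΓjfin j
  have hTfin : T.Finite := hUfin.subset hTsub
  refine ⟨hTfin, ?_⟩
  have h1 : T.ncard ≤ ∑ j ∈ t, (Γj j).ncard :=
    le_trans (Set.ncard_le_ncard hTsub hUfin) (my_ncard_biUnion_le t Γj)
  have hm : (0:ℝ) ≤ (μ (ball (1 : G) (ε / 2))).toReal := ENNReal.toReal_nonneg
  calc ((T.ncard : ℝ)) * (μ (ball (1 : G) (ε / 2))).toReal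
      ≤ ((∑ j ∈ t, (Γj j).ncard : ℕ) : ℝ) * (μ (ball (1 : G) (ε / 2))).toReal := by
        apply mul_le_mul_of_nonneg_right _ hm
        exact_mod_cast h1
    _ = ∑ j ∈ t, ((Γj j).ncard : ℝ) * (μ (ball (1 : G) (ε / 2))).toReal := by
        push_cast
        rw [Finset.sum_mul]
    _ ≤ ∑ _j ∈ t, (μ (ball (1 : G) (r + ε))).toReal := by
        apply Finset.sum_le_sum
        intro j hj
        have := (key j).2.2
        rwa [Set.ncard_image_of_injOn (key j).1] at this
    _ = (t.card : ℝ) * (μ (ball (1 : G) (r + ε))).toReal := by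
        rw [Finset.sum_const, nsmul_eq_mul]

/-- In the setting of the growth lemma, if `G` has exact polynomial growth of
degree `κ` with respect to its metric (i.e. `μ(B_r(e)) / (c·r^κ) → 1` as `r → ∞` for some
`c > 0`), then `|(B_r^G(e) × A) ∩ Γ| ≍ r^κ`: there are `0 < a ≤ b` and `r₀ > 0` with
`a·r^κ ≤ |(B_r^G(e) × A) ∩ Γ| ≤ b·r^κ` for all `r ≥ r₀`. -/
theorem growth_lemma_polynomial_growth
    {G H : Type*}
    [Group G] [MetricSpace G] [IsTopologicalGroup G] [ProperSpace G] [SecondCountableTopology G]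
    [Group H] [MetricSpace H] [IsTopologicalGroup H] [ProperSpace H] [SecondCountableTopology H]
    [MeasurableSpace G] [BorelSpace G]
    (hinvG : ∀ x y g : G, dist (x * g) (y * g) = dist x y)
    (hinvH : ∀ x y g : H, dist (x * g) (y * g) = dist x y)
    (μ : MeasureTheory.Measure G)
    [MeasureTheory.Measure.IsMulRightInvariant μ]
    [MeasureTheory.IsFiniteMeasureOnCompacts μ]
    [MeasureTheory.Measure.IsOpenPosMeasure μ]
    (Γ : Subgroup (G × H)) [DiscreteTopology Γ]
    (hcocompact : ∃ C : Set (G × H), IsCompact C ∧ C * (Γ : Set (G × H)) = Set.univ)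
    (hdense : Dense (Prod.snd '' (Γ : Set (G × H))))
    (A : Set H) (hAne : A.Nonempty) (hAbdd : Bornology.IsBounded A) (hAopen : IsOpen A)
    (κ : ℝ)
    (hgrowth : ∃ c : ℝ, 0 < c ∧
      Filter.Tendsto (fun r : ℝ => (μ (Metric.ball (1 : G) r)).toReal / (c * r ^ κ))
        Filter.atTop (nhds 1)) :
    ∃ a b r₀ : ℝ, 0 < a ∧ a ≤ b ∧ 0 < r₀ ∧ ∀ r : ℝ, r₀ ≤ r →
      a * r ^ κ ≤ (Nat.card ↥((Metric.ball (1 : G) r ×ˢ A) ∩ (Γ : Set (G × H))) : ℝ) ∧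
      (Nat.card ↥((Metric.ball (1 : G) r ×ˢ A) ∩ (Γ : Set (G × H))) : ℝ) ≤ b * r ^ κ := by
  classical
  obtain ⟨c, hc, hlim⟩ := hgrowth
  set f : ℝ → ℝ := fun r => (μ (ball (1 : G) r)).toReal with hf
  have hfmono : ∀ s r : ℝ, s ≤ r → f s ≤ f r := fun s r h =>
    ENNReal.toReal_mono measure_ball_lt_top.ne (measure_mono (ball_subset_ball h))
  have hfpos : ∀ r : ℝ, 0 < r → 0 < f r := fun r hr =>
    ENNReal.toReal_pos (measure_ball_pos μ _ hr).ne' measure_ball_lt_top.ne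
  -- κ is nonnegative
  have hκ : 0 ≤ κ := by
    by_contra hneg
    push_neg at hneg
    have h0 : Filter.Tendsto (fun r : ℝ => c * r ^ κ) Filter.atTop (nhds 0) := by
      have h1 : Filter.Tendsto (fun r : ℝ => r ^ κ) Filter.atTop (nhds 0) := by
        have := tendsto_rpow_neg_atTop (neg_pos.2 hneg)
        simpa [neg_neg] using this
      simpa using h1.const_mul c
    have hf0 : Filter.Tendsto f Filter.atTop (nhds 0) := by
      have h2 := hlim.mul h0
      rw [one_mul] at h2
      refine h2.congr' ?_
      filter_upwards [Filter.eventually_ge_atTop (1 : ℝ)] with r hr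
      have hcr : c * r ^ κ ≠ 0 :=
        (mul_pos hc (Real.rpow_pos_of_pos (by linarith) κ)).ne'
      field_simp
      rfl
    have h3 : f 1 ≤ 0 := by
      refine ge_of_tendsto hf0 ?_
      filter_upwards [Filter.eventually_ge_atTop (1 : ℝ)] with r hr
      exact hfmono 1 r hr
    exact absurd h3 (not_le.2 (hfpos 1 one_pos))
  -- eventual two-sided bounds on f
  have hev := Metric.tendsto_nhds.1 hlim (1/2) (by norm_num)
  obtain ⟨r₁', hr₁'⟩ := Filter.eventually_atTop.1 hev
  set r₁ := max r₁' 1 with hr₁def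
  have hr₁1 : (1 : ℝ) ≤ r₁ := le_max_right _ _
  have hbound : ∀ r : ℝ, r₁ ≤ r → c/2 * r ^ κ ≤ f r ∧ f r ≤ 2*c * r ^ κ := by
    intro r hr
    have hrpos : (0:ℝ) < r := lt_of_lt_of_le one_pos (le_trans hr₁1 hr)
    have hcr : (0:ℝ) < c * r ^ κ := mul_pos hc (Real.rpow_pos_of_pos hrpos κ)
    have hd := hr₁' r (le_trans (le_max_left _ _) hr)
    rw [Real.dist_eq] at hd
    obtain ⟨hd1, hd2⟩ := abs_lt.1 hd
    have e1 : 1/2 * (c * r ^ κ) < f r := (lt_div_iff₀ hcr).1 (by linarith)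
    have e2 : f r < 3/2 * (c * r ^ κ) := (div_lt_iff₀ hcr).1 (by linarith)
    constructor <;> nlinarith
  -- discreteness : uniform separation
  obtain ⟨ε, hε, hε1, hsep⟩ := discrete_sep hinvG hinvH Γ
  -- finite cover of A by small balls
  have hclA : IsCompact (closure A) :=
    Metric.isCompact_of_isClosed_isBounded isClosed_closure hAbdd.closure
  obtain ⟨t, ht⟩ := hclA.elim_finite_subcover (fun h : H => ball h (ε/2))
    (fun _ => isOpen_ball) (fun x hx => Set.mem_iUnion.2 ⟨x, mem_ball_self (by linarith)⟩)
  have hcovA : A ⊆ ⋃ h ∈ t, ball h (ε/2) := subset_closure.trans ht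
  -- relative density radius
  obtain ⟨R, hR, hrel⟩ := rel_dense hinvG hinvH Γ hcocompact hdense A hAne hAopen
  -- constants
  have hfR : 0 < f R := hfpos R hR
  have h2κ : (0:ℝ) < 2 ^ κ := Real.rpow_pos_of_pos two_pos κ
  have hm : 0 < f (ε/2) := hfpos _ (by linarith)
  set a : ℝ := c / (2 * f R * 2 ^ κ) with ha_def
  set b0 : ℝ := (t.card : ℝ) * (2*c*2 ^ κ) / f (ε/2) with hb0_def
  have ha : 0 < a := by positivity
  have hb0 : 0 ≤ b0 := by positivity
  refine ⟨a, a + b0, 2*R + 2*r₁ + 2*ε + 2, ha, by linarith, by linarith, ?_⟩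
  intro r hr
  have hrR : 2*R ≤ r := by linarith
  have hrr₁ : r₁ ≤ r - R := by linarith
  have hrε : ε ≤ r := by linarith
  have hr0 : (0:ℝ) < r := by linarith
  have hrκpos : (0:ℝ) < r ^ κ := Real.rpow_pos_of_pos hr0 κ
  obtain ⟨hTfin, hupper⟩ := upper_count hinvG μ Γ hε hsep A hcovA r
  set T := Metric.ball (1 : G) r ×ˢ A ∩ (Γ : Set (G × H)) with hT
  have hNcard : (Nat.card ↥T : ℝ) = (T.ncard : ℝ) := by
    rw [Nat.card_coe_set_eq]
  rw [hNcard]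
  set N : ℝ := (T.ncard : ℝ) with hN
  have hNnonneg : 0 ≤ N := by positivity
  constructor
  · -- lower bound
    set S : Set G := Prod.fst '' T with hS
    have hScov : ball (1 : G) (r - R) ⊆ ⋃ s ∈ S, ball s R := by
      intro g hg
      obtain ⟨p, hpΓ, hpA, hpd⟩ := hrel g
      have hp1 : p.1 ∈ ball (1 : G) r := by
        rw [mem_ball]
        calc dist p.1 1 ≤ dist p.1 g + dist g 1 := dist_triangle _ _ _
          _ < R + (r - R) := add_lt_add hpd (mem_ball.1 hg)
          _ = r := by ring
      have hpT : p ∈ T := ⟨Set.mk_mem_prod hp1 hpA, hpΓ⟩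
      refine Set.mem_iUnion₂.2 ⟨p.1, ⟨p, hpT, rfl⟩, ?_⟩
      rw [mem_ball, dist_comm]
      exact hpd
    have hlow := cover_count hinvG μ (hTfin.image Prod.fst) hScov
    have hSN : (S.ncard : ℝ) ≤ N := by
      have h := Set.ncard_image_le (f := Prod.fst) hTfin
      rw [hN]
      exact_mod_cast h
    have hlow2 : f (r - R) ≤ N * f R := by
      calc f (r - R) ≤ (S.ncard : ℝ) * f R := hlow
        _ ≤ N * f R := mul_le_mul_of_nonneg_right hSN hfR.le
    have hrhalf : r / 2 ≤ r - R := by linarith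
    have hgr := (hbound (r - R) hrr₁).1
    have hpow : (r/2) ^ κ ≤ (r - R) ^ κ :=
      Real.rpow_le_rpow (by linarith) hrhalf hκ
    have hdiv : (r/2) ^ κ = r ^ κ / 2 ^ κ := Real.div_rpow hr0.le (by norm_num) κ
    have hfinal : a * r ^ κ * f R ≤ f (r - R) := by
      have h1 : a * r ^ κ * f R = c/2 * (r ^ κ / 2 ^ κ) := by
        rw [ha_def]; field_simp
      rw [h1, ← hdiv]
      calc c/2 * (r/2) ^ κ ≤ c/2 * (r - R) ^ κ :=
            mul_le_mul_of_nonneg_left hpow (by linarith)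
        _ ≤ f (r - R) := hgr
    have := le_trans hfinal hlow2
    exact le_of_mul_le_mul_right this hfR
  · -- upper bound
    have hup1 : f (r + ε) ≤ 2*c*2 ^ κ * r ^ κ := by
      have h1 := (hbound (r + ε) (by linarith)).2
      have h2 : (r + ε) ^ κ ≤ (2*r) ^ κ :=
        Real.rpow_le_rpow (by linarith) (by linarith) hκ
      have h3 : (2*r) ^ κ = 2 ^ κ * r ^ κ := Real.mul_rpow (by norm_num) hr0.le
      calc f (r + ε) ≤ 2*c * (r + ε) ^ κ := h1
        _ ≤ 2*c * (2*r) ^ κ := mul_le_mul_of_nonneg_left h2 (by linarith)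
        _ = 2*c*2 ^ κ * r ^ κ := by rw [h3]; ring
    have h4 : N * f (ε/2) ≤ (t.card : ℝ) * (2*c*2 ^ κ * r ^ κ) := by
      calc N * f (ε/2) ≤ (t.card : ℝ) * f (r + ε) := hupper
        _ ≤ (t.card : ℝ) * (2*c*2 ^ κ * r ^ κ) :=
            mul_le_mul_of_nonneg_left hup1 (by positivity)
    have h5 : N ≤ (t.card : ℝ) * (2*c*2 ^ κ * r ^ κ) / f (ε/2) :=
      (le_div_iff₀ hm).2 h4
    have h6 : (t.card : ℝ) * (2*c*2 ^ κ * r ^ κ) / f (ε/2) = b0 * r ^ κ := by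
      rw [hb0_def]; field_simp
    calc N ≤ b0 * r ^ κ := by rw [← h6]; exact h5
      _ ≤ (a + b0) * r ^ κ := by nlinarith
end

section
/- Let (G, H, Γ) be a cut-and-project scheme with window W ⊆ H that is nonempty, relatively compact and Γ-regular, and let Λ := π_G((G × W) ∩ Γ) be the associated model set. Let λ ∈ Λ and μ ∈ G. If μλ ∈ Λ, then μ ∈ Γ_G. Moreover, if μ ∈ Γ_G, then the following are equivalent: (a) μλ ∈ Λ; (b) τ(λ) ∈ τ(μ)⁻¹·W̊; (c) τ(μ) ∈ W̊·τ(λ)⁻¹, where W̊ denotes the interior of W. In particular τ(Disp(λ)) ⊆ W̊·W̊⁻¹, where Disp(λ) := {μ ∈ Γ_G : μλ ∈ Λ}. -/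
open Pointwise

/-- Let `(G, H, Γ)` be a cut-and-project scheme with a nonempty, relatively
compact, `Γ`-regular window `W ⊆ H` and model set `Λ := π_G((G × W) ∩ Γ)`.  The map
`τ = π_H ∘ (π_G|_Γ)⁻¹` is encoded by a function `τ : G → H` satisfying `τ γ.1 = γ.2` for all
`γ ∈ Γ` (which determines it on `Γ_G` since `π_G|_Γ` is injective).  Then for `l ∈ Λ` and
`m ∈ G`: if `m·l ∈ Λ` then `m ∈ Γ_G`; and if `m ∈ Γ_G`, then
`m·l ∈ Λ ↔ τ(l) ∈ τ(m)⁻¹·W̊ ↔ τ(m) ∈ W̊·τ(l)⁻¹`.  In particular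
`τ(Disp(l)) ⊆ W̊·W̊⁻¹` where `Disp(l) = {m ∈ Γ_G : m·l ∈ Λ}`. -/
theorem window_shift_lemma
    {G H : Type*}
    [Group G] [TopologicalSpace G] [IsTopologicalGroup G]
    [LocallyCompactSpace G] [SecondCountableTopology G]
    [Group H] [TopologicalSpace H] [IsTopologicalGroup H]
    [LocallyCompactSpace H] [SecondCountableTopology H]
    (Γ : Subgroup (G × H)) [DiscreteTopology Γ]
    (hcocompact : ∃ C : Set (G × H), IsCompact C ∧ C * (Γ : Set (G × H)) = Set.univ)
    (hinj : Set.InjOn Prod.fst (Γ : Set (G × H)))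
    (hdense : Dense (Prod.snd '' (Γ : Set (G × H))))
    (τ : G → H) (hτ : ∀ p : G × H, p ∈ Γ → τ p.1 = p.2)
    (W : Set H) (hWne : W.Nonempty) (hWrc : IsCompact (closure W))
    (hWreg : frontier W ∩ (Prod.snd '' (Γ : Set (G × H))) = ∅)
    (Λ : Set G) (hΛ : Λ = Prod.fst '' ((Set.univ ×ˢ W) ∩ (Γ : Set (G × H))))
    (l : G) (hl : l ∈ Λ) (m : G) :
    (m * l ∈ Λ → m ∈ Prod.fst '' (Γ : Set (G × H))) ∧
    (m ∈ Prod.fst '' (Γ : Set (G × H)) →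
      ((m * l ∈ Λ ↔ τ l ∈ (τ m)⁻¹ • interior W) ∧
       (m * l ∈ Λ ↔ τ m ∈ interior W * ({(τ l)⁻¹} : Set H)))) ∧
    (τ '' {m' : G | m' ∈ Prod.fst '' (Γ : Set (G × H)) ∧ m' * l ∈ Λ}
      ⊆ interior W * (interior W)⁻¹) := by
  -- a point of Γ_H lies in W iff it lies in the interior of W
  have reg : ∀ h : H, h ∈ Prod.snd '' (Γ : Set (G × H)) → (h ∈ W ↔ h ∈ interior W) := by
    intro h hh
    constructor
    · intro hW
      have hc : h ∈ closure W := subset_closure hW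
      rw [closure_eq_interior_union_frontier] at hc
      rcases hc with h1 | h2
      · exact h1
      · exact absurd (Set.mem_inter h2 hh) (Set.eq_empty_iff_forall_notMem.mp hWreg h)
    · exact fun hi => interior_subset hi
  -- witness for l
  obtain ⟨γl, ⟨⟨-, hγl2⟩, hγlΓ⟩, hγl1⟩ := hΛ ▸ hl
  have hτl : τ l = γl.2 := by rw [← hγl1]; exact hτ _ hγlΓ
  have hτlW : τ l ∈ interior W := by
    rw [hτl]
    exact (reg _ ⟨γl, hγlΓ, rfl⟩).mp hγl2
  -- the main equivalence
  have main : ∀ m' : G, m' ∈ Prod.fst '' (Γ : Set (G × H)) →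
      (m' * l ∈ Λ ↔ τ m' * τ l ∈ interior W) := by
    rintro m' ⟨γm, hγmΓ, hγm1⟩
    have hτm : τ m' = γm.2 := by rw [← hγm1]; exact hτ _ hγmΓ
    have hmlΓ : γm * γl ∈ Γ := mul_mem hγmΓ hγlΓ
    constructor
    · intro hml
      obtain ⟨γ', ⟨⟨-, hγ'2⟩, hγ'Γ⟩, hγ'1⟩ := hΛ ▸ hml
      have heq : γ' = γm * γl := by
        apply hinj hγ'Γ hmlΓ
        show γ'.1 = γm.1 * γl.1
        rw [hγ'1, hγm1, hγl1]
      rw [hτm, hτl]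
      have h2 : (γm * γl).2 ∈ W := heq ▸ hγ'2
      exact (reg _ ⟨γm * γl, hmlΓ, rfl⟩).mp h2
    · intro hint
      rw [hΛ]
      refine ⟨γm * γl, ⟨⟨trivial, ?_⟩, hmlΓ⟩, by rw [← hγm1, ← hγl1]; rfl⟩
      have : (γm * γl).2 = τ m' * τ l := by rw [hτm, hτl]; rfl
      rw [this]
      exact interior_subset hint
  refine ⟨?_, ?_, ?_⟩
  · -- m * l ∈ Λ → m ∈ Γ_G
    intro hml
    obtain ⟨γ', ⟨⟨-, hγ'2⟩, hγ'Γ⟩, hγ'1⟩ := hΛ ▸ hml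
    refine ⟨γ' * γl⁻¹, mul_mem hγ'Γ (inv_mem hγlΓ), ?_⟩
    show γ'.1 * γl.1⁻¹ = m
    rw [hγ'1, hγl1, mul_inv_cancel_right]
  · intro hm
    have h1 := main m hm
    constructor
    · rw [h1, Set.mem_inv_smul_set_iff, smul_eq_mul]
    · rw [h1]
      constructor
      · intro h
        exact ⟨τ m * τ l, h, (τ l)⁻¹, rfl, mul_inv_cancel_right _ _⟩
      · rintro ⟨w, hw, x, hx, hwx⟩
        rcases hx with rfl
        have : τ m * τ l = w := by rw [← hwx, inv_mul_cancel_right]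
        rwa [this]
  · rintro h ⟨m', ⟨hm'Γ, hm'Λ⟩, rfl⟩
    have := (main m' hm'Γ).mp hm'Λ
    exact ⟨τ m' * τ l, this, (τ l)⁻¹, Set.inv_mem_inv.mpr hτlW,
      mul_inv_cancel_right _ _⟩
end

section
/- Let (G, H, Γ) be a cut-and-project scheme, with G and H each carrying a right-invariant, proper metric compatible with the topology, and let W ⊆ H be a nonempty, relatively compact, Γ-regular window with model set Λ := π_G((G × W) ∩ Γ). Then for all λ, μ ∈ Λ and r > 0: λ ∼_r μ if and only if S_r(λ) = S_r(μ). -/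
open Pointwise

variable {G H : Type*}

/-- The cut-and-project set `Λ = π_G((G × W) ∩ Γ)`. -/
def modelSet [Group G] [Group H] (Γ : Subgroup (G × H)) (W : Set H) : Set G :=
  Prod.fst '' ((Set.univ ×ˢ W) ∩ (Γ : Set (G × H)))

/-- The displacements of `l`: `Disp(l) = {m ∈ Γ_G : m·l ∈ Λ}`. -/
def disp [Group G] [Group H] (Γ : Subgroup (G × H)) (W : Set H) (l : G) : Set G :=
  {m : G | m ∈ Prod.fst '' (Γ : Set (G × H)) ∧ m * l ∈ modelSet Γ W}

/-- The `r`-slab of `l`: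
`S_r(l) = π_H({(γ, μ) ∈ Γ : |γ| < r, μ ∈ WW⁻¹, γ⁻¹ ∈ Disp(l)})`. -/
def slabOf [Group G] [Group H] [MetricSpace G] (Γ : Subgroup (G × H)) (W : Set H)
    (r : ℝ) (l : G) : Set H :=
  Prod.snd '' {p : G × H | p ∈ (Γ : Set (G × H)) ∧ dist p.1 1 < r ∧
    p.2 ∈ W * W⁻¹ ∧ p.1⁻¹ ∈ disp Γ W l}

lemma dist_inv_one' [Group G] [MetricSpace G]
    (hinvG : ∀ x y g : G, dist (x * g) (y * g) = dist x y) (a : G) :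
    dist a⁻¹ 1 = dist a 1 := by
  have h := hinvG a⁻¹ 1 a
  rw [inv_mul_cancel, one_mul] at h
  rw [← h, dist_comm]

lemma patch_subset_slab' [Group G] [Group H] [MetricSpace G]
    (hinvG : ∀ x y g : G, dist (x * g) (y * g) = dist x y)
    (Γ : Subgroup (G × H)) (W : Set H) (r : ℝ) (l m : G)
    (h : (Metric.ball l r ∩ modelSet Γ W) * ({l⁻¹} : Set G)
        ⊆ (Metric.ball m r ∩ modelSet Γ W) * ({m⁻¹} : Set G)) :
    slabOf Γ W r l ⊆ slabOf Γ W r m := by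
  rintro μ ⟨p, ⟨hpΓ, hp1, hpW, hG, hΛ⟩, rfl⟩
  have hball : p.1⁻¹ * l ∈ Metric.ball l r := by
    have h2 := hinvG p.1⁻¹ 1 l
    rw [one_mul] at h2
    simpa [Metric.mem_ball, h2, dist_inv_one' hinvG] using hp1
  have hx : p.1⁻¹ ∈ (Metric.ball l r ∩ modelSet Γ W) * ({l⁻¹} : Set G) := by
    have := Set.mul_mem_mul (Set.mem_inter hball hΛ) (Set.mem_singleton l⁻¹)
    simpa using this
  have hx' := h hx
  rw [Set.mul_singleton] at hx'
  obtain ⟨z, ⟨hzball, hzΛ⟩, hzeq⟩ := hx'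
  have hzm : p.1⁻¹ * m = z := by rw [← hzeq, inv_mul_cancel_right]
  exact ⟨p, ⟨hpΓ, hp1, hpW, hG, hzm ▸ hzΛ⟩, rfl⟩

lemma slab_subset_patch' [Group G] [Group H] [MetricSpace G]
    (hinvG : ∀ x y g : G, dist (x * g) (y * g) = dist x y)
    (Γ : Subgroup (G × H))
    (hinj : Set.InjOn Prod.fst (Γ : Set (G × H)))
    (W : Set H) (r : ℝ) (l m : G)
    (hl : l ∈ modelSet Γ W) (hm : m ∈ modelSet Γ W)
    (h : slabOf Γ W r l ⊆ slabOf Γ W r m) :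
    (Metric.ball l r ∩ modelSet Γ W) * ({l⁻¹} : Set G)
      ⊆ (Metric.ball m r ∩ modelSet Γ W) * ({m⁻¹} : Set G) := by
  intro x hx
  rw [Set.mul_singleton] at hx
  obtain ⟨y, ⟨hyball, hyΛ⟩, rfl⟩ := hx
  obtain ⟨pl, ⟨hlprod, hlΓ⟩, hl1⟩ := hl
  obtain ⟨pm, ⟨hmprod, hmΓ⟩, hm1⟩ := hm
  obtain ⟨py, ⟨hyprod, hyΓ⟩, hy1⟩ := hyΛ
  have hlW : pl.2 ∈ W := hlprod.2
  have hmW : pm.2 ∈ W := hmprod.2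
  have hyW : py.2 ∈ W := hyprod.2
  -- the element q = pl * py⁻¹ of Γ
  set q : G × H := pl * py⁻¹ with hq
  have hqΓ : q ∈ (Γ : Set (G × H)) :=
    mul_mem (SetLike.mem_coe.mp hlΓ) (inv_mem (SetLike.mem_coe.mp hyΓ))
  have hq1 : q.1 = l * y⁻¹ := by simp [hq, hl1, hy1]
  have hq1inv : q.1⁻¹ = y * l⁻¹ := by rw [hq1, mul_inv_rev, inv_inv]
  have hdistq : dist q.1 1 < r := by
    have h2 := hinvG l y y⁻¹
    rw [mul_inv_cancel] at h2
    rw [hq1, h2, dist_comm]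
    exact hyball
  have hμW : q.2 ∈ W * W⁻¹ := by
    have : pl.2 * py.2⁻¹ ∈ W * W⁻¹ :=
      Set.mul_mem_mul hlW (Set.inv_mem_inv.mpr hyW)
    simpa [hq] using this
  have hμl : q.2 ∈ slabOf Γ W r l := by
    refine ⟨q, ⟨hqΓ, hdistq, hμW, ⟨q⁻¹, inv_mem hqΓ, by simp⟩, ?_⟩, rfl⟩
    rw [hq1inv, inv_mul_cancel_right]
    exact ⟨py, ⟨hyprod, hyΓ⟩, hy1⟩
  obtain ⟨p', ⟨hp'Γ, hp'1, hp'W, hp'G, hp'Λ⟩, hp'2⟩ := h hμl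
  -- the star of p'.1⁻¹ * m equals p'.2⁻¹ * pm.2
  obtain ⟨pz, ⟨hzprod, hzΓ⟩, hz1⟩ := hp'Λ
  have hzW : pz.2 ∈ W := hzprod.2
  have hkΓ : p'⁻¹ * pm ∈ (Γ : Set (G × H)) :=
    mul_mem (inv_mem (SetLike.mem_coe.mp hp'Γ)) (SetLike.mem_coe.mp hmΓ)
  have hfst : pz.1 = (p'⁻¹ * pm).1 := by simp [hz1, hm1]
  have hpz : pz = p'⁻¹ * pm := hinj hzΓ hkΓ hfst
  have hstar : p'.2⁻¹ * pm.2 ∈ W := by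
    have : pz.2 = p'.2⁻¹ * pm.2 := by rw [hpz]; simp
    rwa [← this]
  -- now conclude
  have hxmΛ : y * l⁻¹ * m ∈ modelSet Γ W := by
    refine ⟨q⁻¹ * pm, ⟨⟨Set.mem_univ _, ?_⟩, mul_mem (inv_mem hqΓ) (SetLike.mem_coe.mp hmΓ)⟩, ?_⟩
    · have hq2 : q.2 = p'.2 := hp'2.symm
      show (q⁻¹ * pm).2 ∈ W
      simpa [hq2] using hstar
    · show (q⁻¹ * pm).1 = y * l⁻¹ * m
      simp [hq1inv, hm1]
  have hxmball : y * l⁻¹ * m ∈ Metric.ball m r := by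
    have h2 := hinvG (y * l⁻¹) 1 m
    rw [one_mul] at h2
    have h3 := hinvG y l l⁻¹
    rw [mul_inv_cancel] at h3
    rw [Metric.mem_ball, h2, h3]
    exact Metric.mem_ball.mp hyball
  rw [Set.mul_singleton]
  exact ⟨y * l⁻¹ * m, ⟨hxmball, hxmΛ⟩, by simp⟩

/-- `l ∼_r m` iff the `r`-patches agree: `P_r(l)·l⁻¹ = P_r(m)·m⁻¹`,
where `P_r(x) = B_r(x) ∩ Λ`. -/
def patchEquiv [Group G] [MetricSpace G] (Λ : Set G) (r : ℝ) (l m : G) : Prop :=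
  (Metric.ball l r ∩ Λ) * ({l⁻¹} : Set G) = (Metric.ball m r ∩ Λ) * ({m⁻¹} : Set G)

/-- For a cut-and-project scheme `(G, H, Γ)` with nonempty, relatively compact,
`Γ`-regular window `W` and model set `Λ`: for all `l, m ∈ Λ` and `r > 0`,
`l ∼_r m` if and only if `S_r(l) = S_r(m)`. -/
theorem patchEquiv_iff_slab_eq
    [Group G] [MetricSpace G] [IsTopologicalGroup G] [ProperSpace G] [SecondCountableTopology G]
    [Group H] [MetricSpace H] [IsTopologicalGroup H] [ProperSpace H] [SecondCountableTopology H]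
    (hinvG : ∀ x y g : G, dist (x * g) (y * g) = dist x y)
    (hinvH : ∀ x y g : H, dist (x * g) (y * g) = dist x y)
    (Γ : Subgroup (G × H)) [DiscreteTopology Γ]
    (hcocompact : ∃ C : Set (G × H), IsCompact C ∧ C * (Γ : Set (G × H)) = Set.univ)
    (hinj : Set.InjOn Prod.fst (Γ : Set (G × H)))
    (hdense : Dense (Prod.snd '' (Γ : Set (G × H))))
    (W : Set H) (hWne : W.Nonempty) (hWrc : IsCompact (closure W))
    (hWreg : frontier W ∩ (Prod.snd '' (Γ : Set (G × H))) = ∅)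
    (r : ℝ) (hr : 0 < r)
    (l : G) (hl : l ∈ modelSet Γ W) (m : G) (hm : m ∈ modelSet Γ W) :
    patchEquiv (modelSet Γ W) r l m ↔ slabOf Γ W r l = slabOf Γ W r m := by
  constructor
  · intro hpe
    exact Set.Subset.antisymm
      (patch_subset_slab' hinvG Γ W r l m hpe.le)
      (patch_subset_slab' hinvG Γ W r m l hpe.ge)
  · intro hs
    exact Set.Subset.antisymm
      (slab_subset_patch' hinvG Γ hinj W r l m hl hm hs.le)
      (slab_subset_patch' hinvG Γ hinj W r m l hm hl hs.ge)
end

section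
/- Let L be a set of n distinct affine lines in ℝ². Then: (a) for every integer k with 2 ≤ k ≤ n, t(L, k) ≤ n(n−1)/(k(k−1)); (b) for every integer k with √(2n) < k ≤ n, t(L, k) < 2n/k. -/
/-- An affine line in `ℝ²`: a level set of a nonzero linear functional. -/
def IsAffineLine (l : Set (EuclideanSpace ℝ (Fin 2))) : Prop :=
  ∃ (φ : EuclideanSpace ℝ (Fin 2) →ₗ[ℝ] ℝ) (c : ℝ), φ ≠ 0 ∧ l = {x | φ x = c}

/-- The number of lines of `L` passing through the point `p`. -/
noncomputable def linesThrough (L : Finset (Set (EuclideanSpace ℝ (Fin 2))))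
    (p : EuclideanSpace ℝ (Fin 2)) : ℕ :=
  Nat.card ↥{l : Set (EuclideanSpace ℝ (Fin 2)) | l ∈ L ∧ p ∈ l}

/-- `t(L, k)`: the number of points lying on at least `k` distinct lines of `L`. -/
noncomputable def tcount (L : Finset (Set (EuclideanSpace ℝ (Fin 2)))) (k : ℕ) : ℕ :=
  Nat.card ↥{p : EuclideanSpace ℝ (Fin 2) | k ≤ linesThrough L p}

section Aux

open scoped Classical

local notation "E2" => EuclideanSpace ℝ (Fin 2)

open Finset

private lemma ker_eq_span' {v : E2} (hv : v ≠ 0) (f : E2 →ₗ[ℝ] ℝ)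
    (hf : f ≠ 0) (hfv : f v = 0) : LinearMap.ker f = Submodule.span ℝ {v} := by
  have h1 : Module.finrank ℝ (LinearMap.ker f) = 1 := by
    have h := LinearMap.finrank_range_add_finrank_ker f
    rw [Module.Dual.range_eq_top_of_ne_zero hf] at h
    simp [finrank_euclideanSpace] at h
    omega
  symm
  apply Submodule.eq_of_le_of_finrank_eq
  · rwa [Submodule.span_singleton_le_iff_mem, LinearMap.mem_ker]
  · rw [finrank_span_singleton hv, h1]

private lemma line_unique' {l₁ l₂ : Set E2} (h1 : IsAffineLine l₁) (h2 : IsAffineLine l₂)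
    {p q : E2} (hpq : p ≠ q) (hp1 : p ∈ l₁) (hq1 : q ∈ l₁) (hp2 : p ∈ l₂) (hq2 : q ∈ l₂) :
    l₁ = l₂ := by
  obtain ⟨φ, c, hφ, rfl⟩ := h1
  obtain ⟨ψ, d, hψ, rfl⟩ := h2
  rw [Set.mem_setOf_eq] at hp1 hq1 hp2 hq2
  have hv : q - p ≠ 0 := sub_ne_zero.mpr (Ne.symm hpq)
  have kφ : LinearMap.ker φ = Submodule.span ℝ {q - p} :=
    ker_eq_span' hv φ hφ (by simp only [map_sub]; rw [hp1, hq1]; ring)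
  have kψ : LinearMap.ker ψ = Submodule.span ℝ {q - p} :=
    ker_eq_span' hv ψ hψ (by simp only [map_sub]; rw [hp2, hq2]; ring)
  ext x
  simp only [Set.mem_setOf_eq]
  constructor <;> intro hx
  · have h : φ (x - p) = 0 := by simp [map_sub, hx, hp1]
    have h' : x - p ∈ LinearMap.ker ψ := by rw [kψ, ← kφ]; exact h
    have h'' := LinearMap.mem_ker.mp h'
    rw [map_sub] at h''
    linarith
  · have h : ψ (x - p) = 0 := by simp [map_sub, hx, hp2]
    have h' : x - p ∈ LinearMap.ker φ := by rw [kφ, ← kψ]; exact h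
    have h'' := LinearMap.mem_ker.mp h'
    rw [map_sub] at h''
    linarith

private lemma linesThrough_eq' (L : Finset (Set E2)) (p : E2) :
    linesThrough L p = (L.filter (fun l => p ∈ l)).card := by
  unfold linesThrough
  have h : {l : Set E2 | l ∈ L ∧ p ∈ l} = ↑(L.filter (fun l => p ∈ l)) := by
    ext l; simp
  rw [h, Nat.card_coe_set_eq, Set.ncard_coe_finset]

private lemma inter_card_le_one' (L : Finset (Set E2)) (hL : ∀ l ∈ L, IsAffineLine l)
    {p q : E2} (hpq : p ≠ q) :
    ((L.filter (fun l => p ∈ l)) ∩ (L.filter (fun l => q ∈ l))).card ≤ 1 := by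
  apply Finset.card_le_one.mpr
  intro a ha b hb
  simp only [Finset.mem_inter, Finset.mem_filter] at ha hb
  exact line_unique' (hL a ha.1.1) (hL b hb.1.1) hpq ha.1.2 ha.2.2 hb.1.2 hb.2.2

private lemma two_mul_choose_two (m : ℕ) : 2 * m.choose 2 = m * (m - 1) := by
  rw [Nat.choose_two_right]
  rcases m with _ | s
  · simp
  · simp only [Nat.succ_sub_one]
    rw [Nat.mul_div_cancel']
    exact (Nat.even_mul_succ_self s).two_dvd.trans (dvd_of_eq (by ring))

/-- Double counting pairs of lines for part (a). -/
private lemma pair_count' (L : Finset (Set E2)) (hL : ∀ l ∈ L, IsAffineLine l)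
    (P : Finset E2) (k : ℕ)
    (hP : ∀ p ∈ P, k ≤ (L.filter (fun l => p ∈ l)).card) :
    P.card * k.choose 2 ≤ (L.card).choose 2 := by
  have hdisj : ∀ x ∈ P, ∀ y ∈ P, x ≠ y →
      Disjoint ((L.filter (fun l => x ∈ l)).powersetCard 2)
        ((L.filter (fun l => y ∈ l)).powersetCard 2) := by
    intro x _ y _ hxy
    rw [Finset.disjoint_left]
    intro s hsx hsy
    rw [Finset.mem_powersetCard] at hsx hsy
    obtain ⟨a, ha, b, hb, hab⟩ := Finset.one_lt_card.mp (by omega : 1 < s.card)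
    have ha' := Finset.mem_inter.mpr ⟨hsx.1 ha, hsy.1 ha⟩
    have hb' := Finset.mem_inter.mpr ⟨hsx.1 hb, hsy.1 hb⟩
    exact hab (Finset.card_le_one.mp (inter_card_le_one' L hL hxy) a ha' b hb')
  calc P.card * k.choose 2 = ∑ _p ∈ P, k.choose 2 := by
        rw [Finset.sum_const, smul_eq_mul]
    _ ≤ ∑ p ∈ P, (L.filter (fun l => p ∈ l)).card.choose 2 :=
        Finset.sum_le_sum fun p hp => Nat.choose_mono 2 (hP p hp)
    _ = ∑ p ∈ P, ((L.filter (fun l => p ∈ l)).powersetCard 2).card := by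
        simp [Finset.card_powersetCard]
    _ = (P.biUnion fun p => (L.filter (fun l => p ∈ l)).powersetCard 2).card :=
        (Finset.card_biUnion hdisj).symm
    _ ≤ (L.powersetCard 2).card := by
        apply Finset.card_le_card
        intro s hs
        rw [Finset.mem_biUnion] at hs
        obtain ⟨p, _, hsp⟩ := hs
        rw [Finset.mem_powersetCard] at hsp ⊢
        exact ⟨hsp.1.trans (Finset.filter_subset _ _), hsp.2⟩
    _ = (L.card).choose 2 := Finset.card_powersetCard 2 L

/-- Union lower bound for part (b). -/
private lemma union_bound' (L : Finset (Set E2)) (hL : ∀ l ∈ L, IsAffineLine l)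
    (k : ℕ) (Q : Finset E2)
    (hQ : ∀ p ∈ Q, k ≤ (L.filter (fun l => p ∈ l)).card) :
    2 * Q.card * k + Q.card ≤
      2 * (Q.biUnion (fun p => L.filter (fun l => p ∈ l))).card + Q.card * Q.card := by
  induction Q using Finset.induction_on with
  | empty => simp
  | @insert a Q ha ih =>
    have hQ' : ∀ p ∈ Q, k ≤ (L.filter (fun l => p ∈ l)).card :=
      fun p hp => hQ p (Finset.mem_insert_of_mem hp)
    have ihh := ih hQ'
    have hka : k ≤ (L.filter (fun l => a ∈ l)).card := hQ a (Finset.mem_insert_self a Q)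
    have hbi : (insert a Q).biUnion (fun p => L.filter (fun l => p ∈ l)) =
        (L.filter (fun l => a ∈ l)) ∪ Q.biUnion (fun p => L.filter (fun l => p ∈ l)) :=
      Finset.biUnion_insert
    have hcap : ((L.filter (fun l => a ∈ l)) ∩
        Q.biUnion (fun p => L.filter (fun l => p ∈ l))).card ≤ Q.card := by
      rw [Finset.inter_biUnion]
      calc (Q.biUnion fun q => (L.filter (fun l => a ∈ l)) ∩ (L.filter (fun l => q ∈ l))).card
          ≤ ∑ q ∈ Q, ((L.filter (fun l => a ∈ l)) ∩ (L.filter (fun l => q ∈ l))).card :=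
            Finset.card_biUnion_le
        _ ≤ ∑ _q ∈ Q, 1 := Finset.sum_le_sum fun q hq =>
            inter_card_le_one' L hL (by rintro rfl; exact ha hq)
        _ = Q.card := by simp
    have hun := Finset.card_union_add_card_inter (L.filter (fun l => a ∈ l))
      (Q.biUnion (fun p => L.filter (fun l => p ∈ l)))
    rw [hbi, Finset.card_insert_of_notMem ha]
    nlinarith [hun, hcap, hka, ihh]

end Aux

/-- Let `L` be a set of `n` distinct affine lines in `ℝ²`.  Then
(a) `t(L, k) ≤ n(n−1)/(k(k−1))` for all `2 ≤ k ≤ n`, and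
(b) `t(L, k) < 2n/k` for all `√(2n) < k ≤ n`. -/
theorem tcount_bounds (L : Finset (Set (EuclideanSpace ℝ (Fin 2))))
    (hL : ∀ l ∈ L, IsAffineLine l) :
    (∀ k : ℕ, 2 ≤ k → k ≤ L.card →
      (tcount L k : ℝ) ≤ ((L.card : ℝ) * ((L.card : ℝ) - 1)) / ((k : ℝ) * ((k : ℝ) - 1))) ∧
    (∀ k : ℕ, Real.sqrt (2 * L.card) < (k : ℝ) → k ≤ L.card →
      (tcount L k : ℝ) < 2 * (L.card : ℝ) / (k : ℝ)) := by
  classical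
  set n := L.card with hn
  constructor
  · -- part (a)
    intro k hk2 hkn
    have hkR : (2 : ℝ) ≤ (k : ℝ) := by exact_mod_cast hk2
    have hnR : (2 : ℝ) ≤ (n : ℝ) := by exact_mod_cast hk2.trans hkn
    have hden : (0 : ℝ) < (k : ℝ) * ((k : ℝ) - 1) := by nlinarith
    have hnum : (0 : ℝ) ≤ (n : ℝ) * ((n : ℝ) - 1) := by nlinarith
    by_cases hfin : {p : EuclideanSpace ℝ (Fin 2) | k ≤ linesThrough L p}.Finite
    · have ht : tcount L k = hfin.toFinset.card := by
        rw [tcount, Nat.card_coe_set_eq, Set.ncard_eq_toFinset_card _ hfin]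
      have hcnt : hfin.toFinset.card * k.choose 2 ≤ n.choose 2 := by
        apply pair_count' L hL _ k
        intro p hp
        have h := (Set.Finite.mem_toFinset hfin).mp hp
        rwa [Set.mem_setOf_eq, linesThrough_eq' L p] at h
      have hnat : hfin.toFinset.card * (k * (k - 1)) ≤ n * (n - 1) := by
        calc hfin.toFinset.card * (k * (k - 1))
            = hfin.toFinset.card * (2 * k.choose 2) := by rw [two_mul_choose_two]
          _ = 2 * (hfin.toFinset.card * k.choose 2) := by ring
          _ ≤ 2 * n.choose 2 := by omega
          _ = n * (n - 1) := two_mul_choose_two n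
      rw [ht, le_div_iff₀ hden]
      have hk1 : 1 ≤ k := by omega
      have hn1 : 1 ≤ n := by omega
      have hc : ((hfin.toFinset.card * (k * (k - 1)) : ℕ) : ℝ) ≤ ((n * (n - 1) : ℕ) : ℝ) := by
        exact_mod_cast hnat
      push_cast [Nat.cast_sub hk1, Nat.cast_sub hn1] at hc
      linarith
    · have ht : tcount L k = 0 := by
        haveI : Infinite ↥{p : EuclideanSpace ℝ (Fin 2) | k ≤ linesThrough L p} :=
          Set.infinite_coe_iff.mpr hfin
        rw [tcount]
        exact Nat.card_eq_zero_of_infinite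
      rw [ht, Nat.cast_zero]
      exact div_nonneg hnum hden.le
  · -- part (b)
    intro k hks hkn
    have hk1 : 1 ≤ k := by
      by_contra h
      push_neg at h
      interval_cases k
      simpa using hks.trans_le' (Real.sqrt_nonneg _)
    have hn1 : 1 ≤ n := hk1.trans hkn
    have hkR : (0 : ℝ) < (k : ℝ) := by exact_mod_cast hk1
    have h2n : 2 * n < k * k := by
      have h1 : (2 * (n : ℝ)) < (k : ℝ) ^ 2 := (Real.sqrt_lt' hkR).mp hks
      have h2 : ((2 * n : ℕ) : ℝ) < ((k * k : ℕ) : ℝ) := by push_cast; nlinarith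
      exact_mod_cast h2
    have hrhs : (0 : ℝ) < 2 * (n : ℝ) / (k : ℝ) := by
      apply div_pos _ hkR
      have : (1 : ℝ) ≤ (n : ℝ) := by exact_mod_cast hn1
      linarith
    by_cases hfin : {p : EuclideanSpace ℝ (Fin 2) | k ≤ linesThrough L p}.Finite
    · have ht : tcount L k = hfin.toFinset.card := by
        rw [tcount, Nat.card_coe_set_eq, Set.ncard_eq_toFinset_card _ hfin]
      rw [ht]
      by_contra hcon
      push_neg at hcon
      rw [div_le_iff₀ hkR] at hcon
      have htk : 2 * n ≤ hfin.toFinset.card * k := by exact_mod_cast hcon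
      set t := hfin.toFinset.card with htdef
      obtain ⟨Q, hQP, hQcard⟩ := hfin.toFinset.exists_subset_card_eq (min_le_left t k)
      have hQlines : ∀ p ∈ Q, k ≤ (L.filter (fun l => p ∈ l)).card := by
        intro p hp
        have h := (Set.Finite.mem_toFinset hfin).mp (hQP hp)
        rwa [Set.mem_setOf_eq, linesThrough_eq' L p] at h
      have hub := union_bound' L hL k Q hQlines
      rw [hQcard] at hub
      have hUn : (Q.biUnion (fun p => L.filter (fun l => p ∈ l))).card ≤ n := by
        apply Finset.card_le_card
        intro l hl
        rw [Finset.mem_biUnion] at hl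
        obtain ⟨p, _, hlp⟩ := hl
        exact (Finset.mem_filter.mp hlp).1
      rcases le_total k t with hkt | htk'
      · rw [min_eq_right hkt] at hub
        nlinarith [hub, hUn, h2n]
      · rw [min_eq_left htk'] at hub
        have htt : t * t ≤ t * k := Nat.mul_le_mul_left t htk'
        nlinarith [hub, hUn, h2n, htt, htk, hn1]
    · have ht : tcount L k = 0 := by
        haveI : Infinite ↥{p : EuclideanSpace ℝ (Fin 2) | k ≤ linesThrough L p} :=
          Set.infinite_coe_iff.mpr hfin
        rw [tcount]
        exact Nat.card_eq_zero_of_infinite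
      rw [ht, Nat.cast_zero]
      exact hrhs
end

section
/- Let 𝔤 be a Lie algebra over ℝ (or over any field of characteristic zero). If 𝔤 is locally two-step nilpotent, i.e. ⁅X, ⁅X, Y⁆⁆ = 0 for all X, Y ∈ 𝔤, then 𝔤 is two-step nilpotent or abelian, i.e. ⁅Z, ⁅Y, X⁆⁆ = 0 for all X, Y, Z ∈ 𝔤. -/
/-- Let `𝔤` be a Lie algebra over `ℝ`.  If `𝔤` is locally two-step
nilpotent, i.e. `⁅X, ⁅X, Y⁆⁆ = 0` for all `X, Y`, then `𝔤` is two-step nilpotent or abelian,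
i.e. `⁅Z, ⁅Y, X⁆⁆ = 0` for all `X, Y, Z`. -/
theorem two_step_nilpotent_of_locally_two_step_nilpotent
    {L : Type*} [LieRing L] [LieAlgebra ℝ L]
    (h : ∀ X Y : L, ⁅X, ⁅X, Y⁆⁆ = 0) :
    ∀ X Y Z : L, ⁅Z, ⁅Y, X⁆⁆ = 0 := by
  have pol : ∀ A B C : L, ⁅A, ⁅B, C⁆⁆ = -⁅B, ⁅A, C⁆⁆ := by
    intro A B C
    have h1 := h (A + B) C
    simp only [add_lie, lie_add, h A C, h B C, zero_add, add_zero] at h1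
    have h2 : ⁅A, ⁅B, C⁆⁆ + ⁅B, ⁅A, C⁆⁆ = 0 := by
      rw [← h1]; abel
    exact eq_neg_of_add_eq_zero_left h2
  -- cyclic invariance: ⁅A, ⁅B, C⁆⁆ = ⁅B, ⁅C, A⁆⁆
  have cyc : ∀ A B C : L, ⁅A, ⁅B, C⁆⁆ = ⁅B, ⁅C, A⁆⁆ := by
    intro A B C
    rw [pol A B C, ← lie_skew A C, lie_neg, neg_neg]
  intro X Y Z
  set a := ⁅Z, ⁅Y, X⁆⁆ with ha
  have e1 : ⁅Y, ⁅X, Z⁆⁆ = a := (cyc Z Y X).symm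
  have e2 : ⁅X, ⁅Z, Y⁆⁆ = a := (cyc Y X Z).symm.trans e1
  have j : ⁅⁅Z, Y⁆, X⁆ = ⁅Z, ⁅Y, X⁆⁆ - ⁅Y, ⁅Z, X⁆⁆ := lie_lie Z Y X
  have k1 : ⁅⁅Z, Y⁆, X⁆ = -a := by rw [← lie_skew, e2]
  have k2 : ⁅Y, ⁅Z, X⁆⁆ = -a := by
    rw [show ⁅Z, X⁆ = -⁅X, Z⁆ from (lie_skew Z X).symm, lie_neg, e1]
  rw [k1, k2, ← ha, sub_neg_eq_add] at j
  have jac : a + a + a = 0 := by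
    rw [show a + a + a = a + a - -a by abel, ← j]; abel
  have h3 : (3 : ℝ) • a = 0 := by
    rw [show (3 : ℝ) = 1 + 1 + 1 by norm_num, add_smul, add_smul, one_smul, ← jac]
  rcases smul_eq_zero.mp h3 with h4 | h4
  · norm_num at h4
  · exact h4
end
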